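/- arXiv:1510.01049 — 7 statements merged into one kernel-verified Lean document; each statement's English description precedes it below -/
import Mathlib

section
/- Let G be a group, H a subgroup of G, and n ∈ ℕ. Suppose ((a_{l,i})_{l∈ℕ,0≤i<n}, (b_l)_{l∈ℕ}) is an H-witness sequence of width n in G. Then: (1) for all l ≠ k in ℕ and all i < n, a_{l,i} ∈ C_G(b_k); and (2) for all k < l in ℕ, all i < n, and every element w of the subgroup of G generated by H ∪ {a_{k,0}, …, a_{k,n−1}}, we have a_{l,i} ∈ C_G(w⁻¹ b_k w). -/
/-- The center of a subgroup `H` of `G`, viewed as a subgroup of `G`: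
`Z(H) = H ⊓ C_G(H)`. -/
def subgroupCenter {G : Type*} [Group G] (H : Subgroup G) : Subgroup G :=
  H ⊓ Subgroup.centralizer (H : Set G)

/-- `E_l`: the subgroup of `G` generated by `H ∪ {a_{k,j}, b_k : k < l, j < n}`. -/
def witnessEnv {G : Type*} [Group G] (H : Subgroup G) {n : ℕ}
    (a : ℕ → Fin n → G) (b : ℕ → G) (l : ℕ) : Subgroup G :=
  Subgroup.closure ((H : Set G) ∪ {x | ∃ k < l, (∃ j : Fin n, x = a k j) ∨ x = b k})

/-- `(a, b)` is an `H`-witness sequence of width `n` in `G`. -/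
def IsHWitnessSeq {G : Type*} [Group G] (H : Subgroup G) (n : ℕ)
    (a : ℕ → Fin n → G) (b : ℕ → G) : Prop :=
  ∀ l : ℕ,
    (∀ i : Fin n, ∀ g ∈ witnessEnv H a b l,
        subgroupCenter H ≤ Subgroup.centralizer {g} →
        a l i ∈ Subgroup.centralizer {g}) ∧
    (∀ g ∈ witnessEnv H a b l,
        H ≤ Subgroup.centralizer {g} → b l ∈ Subgroup.centralizer {g}) ∧
    (∀ i j : Fin n, i < j → (a l i)⁻¹ * a l j ∉ Subgroup.centralizer {b l})

theorem witness_seq_commutation {G : Type*} [Group G] (H : Subgroup G) (n : ℕ)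
    (a : ℕ → Fin n → G) (b : ℕ → G) (hw : IsHWitnessSeq H n a b) :
    (∀ l k : ℕ, l ≠ k → ∀ i : Fin n, a l i ∈ Subgroup.centralizer {b k}) ∧
    (∀ k l : ℕ, k < l → ∀ i : Fin n,
      ∀ w ∈ Subgroup.closure ((H : Set G) ∪ {x | ∃ j : Fin n, x = a k j}),
        a l i ∈ Subgroup.centralizer {w⁻¹ * b k * w}) := by
  have hmemc : ∀ x g : G, x ∈ Subgroup.centralizer ({g} : Set G) ↔ g * x = x * g := by
    intro x g
    rw [Subgroup.mem_centralizer_iff]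
    constructor
    · intro hx; exact hx g rfl
    · rintro h y rfl; exact h
  have hHE : ∀ l : ℕ, (H : Set G) ⊆ (witnessEnv H a b l : Set G) :=
    fun l x hx => Subgroup.subset_closure (Or.inl hx)
  have haE : ∀ k l : ℕ, k < l → ∀ j : Fin n, a k j ∈ witnessEnv H a b l :=
    fun k l hkl j => Subgroup.subset_closure (Or.inr ⟨k, hkl, Or.inl ⟨j, rfl⟩⟩)
  have hbE : ∀ k l : ℕ, k < l → b k ∈ witnessEnv H a b l :=
    fun k l hkl => Subgroup.subset_closure (Or.inr ⟨k, hkl, Or.inr rfl⟩)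
  -- Z(H) centralizes every element of H
  have hZH : ∀ g ∈ H, subgroupCenter H ≤ Subgroup.centralizer {g} := by
    intro g hg z hz
    rw [hmemc]
    exact Subgroup.mem_centralizer_iff.mp hz.2 g hg
  have hZZ : ∀ z ∈ subgroupCenter H, subgroupCenter H ≤ Subgroup.centralizer {z} :=
    fun z hz => hZH z hz.1
  -- Z(H) centralizes every b k
  have hZb : ∀ k : ℕ, subgroupCenter H ≤ Subgroup.centralizer {b k} := by
    intro k z hz
    have h1 : b k ∈ Subgroup.centralizer {z} := by
      refine (hw k).2.1 z (hHE k hz.1) ?_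
      intro h hh
      rw [hmemc]
      exact (Subgroup.mem_centralizer_iff.mp hz.2 h hh).symm
    rw [hmemc] at h1 ⊢
    exact h1.symm
  -- H centralizes every a l i
  have hHa : ∀ (l : ℕ) (i : Fin n), H ≤ Subgroup.centralizer {a l i} := by
    intro l i h hh
    have h1 := (hw l).1 i h (hHE l hh) (hZH h hh)
    rw [hmemc] at h1 ⊢
    exact h1.symm
  -- Z(H) centralizes every a k j
  have hZa : ∀ (k : ℕ) (j : Fin n), ∀ z ∈ subgroupCenter H,
      a k j ∈ Subgroup.centralizer {z} :=
    fun k j z hz => (hw k).1 j z (hHE k hz.1) (hZZ z hz)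
  constructor
  · intro l k hlk i
    rcases lt_or_gt_of_ne hlk with h | h
    · have h1 := (hw k).2.1 (a l i) (haE l k h i) (hHa l i)
      rw [hmemc] at h1 ⊢
      exact h1.symm
    · exact (hw l).1 i (b k) (hbE k l h) (hZb k)
  · intro k l hkl i w hwmem
    have hSle : Subgroup.closure ((H : Set G) ∪ {x | ∃ j : Fin n, x = a k j}) ≤
        witnessEnv H a b l := by
      refine (Subgroup.closure_le _).2 ?_
      rintro x (hx | ⟨j, rfl⟩)
      · exact hHE l hx
      · exact haE k l hkl j
    have hwE : w ∈ witnessEnv H a b l := hSle hwmem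
    have hg : w⁻¹ * b k * w ∈ witnessEnv H a b l :=
      mul_mem (mul_mem (inv_mem hwE) (hbE k l hkl)) hwE
    refine (hw l).1 i _ hg ?_
    intro z hz
    -- z commutes with w
    have hzw : Commute z w := by
      have h1 : w ∈ Subgroup.centralizer ({z} : Set G) := by
        refine (Subgroup.closure_le _).2 ?_ hwmem
        rintro x (hx | ⟨j, rfl⟩)
        · rw [SetLike.mem_coe, hmemc]
          exact (Subgroup.mem_centralizer_iff.mp hz.2 x hx).symm
        · exact hZa k j z hz
      rw [hmemc] at h1
      exact h1
    have hzb : Commute z (b k) := by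
      have h1 := hZb k hz
      rw [hmemc] at h1
      exact h1.symm
    rw [hmemc]
    exact (((hzw.inv_right.mul_right hzb).mul_right hzw).symm).eq
end

section
/- Let G be a group, H a subgroup of G, and n ∈ ℕ. Suppose ((a_{l,i})_{l∈ℕ,0≤i<n}, (b_l)_{l∈ℕ}) is an H-witness sequence of width n in G. Then: (rows) for every l ∈ ℕ the n left cosets a_{l,0}·C_G(b_l), …, a_{l,n−1}·C_G(b_l) are pairwise disjoint; and (columns) for every m ∈ ℕ and every function f : {0,…,m} → {0,…,n−1}, the intersection ⋂_{l=0}^{m} a_{l,f(l)}·C_G(b_l) is nonempty (indeed it contains the product a_{m,f(m)} a_{m−1,f(m−1)} ⋯ a_{0,f(0)}). -/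
open scoped Pointwise

section Aux

variable {G : Type*} [Group G] {H : Subgroup G} {n : ℕ}
  {a : ℕ → Fin n → G} {b : ℕ → G}

lemma memEnv_of_memH (l : ℕ) {h : G} (hh : h ∈ H) : h ∈ witnessEnv H a b l :=
  Subgroup.subset_closure (Or.inl hh)

lemma memEnv_a {k l : ℕ} (hkl : k < l) (j : Fin n) : a k j ∈ witnessEnv H a b l :=
  Subgroup.subset_closure (Or.inr ⟨k, hkl, Or.inl ⟨j, rfl⟩⟩)

lemma memEnv_b {k l : ℕ} (hkl : k < l) : b k ∈ witnessEnv H a b l :=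
  Subgroup.subset_closure (Or.inr ⟨k, hkl, Or.inr rfl⟩)

lemma center_le_centralizer_of_memH {h : G} (hh : h ∈ H) :
    subgroupCenter H ≤ Subgroup.centralizer {h} := by
  intro z hz
  rw [Subgroup.mem_centralizer_singleton_iff]
  exact (Subgroup.mem_centralizer_iff.mp hz.2 h hh).symm

lemma H_le_centralizer_a (hw : IsHWitnessSeq H n a b) (l : ℕ) (i : Fin n) :
    H ≤ Subgroup.centralizer {a l i} := by
  intro h hh
  rw [Subgroup.mem_centralizer_singleton_iff]
  have := (hw l).1 i h (memEnv_of_memH l hh) (center_le_centralizer_of_memH hh)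
  rw [Subgroup.mem_centralizer_singleton_iff] at this
  exact this.symm

lemma center_le_centralizer_a (hw : IsHWitnessSeq H n a b) (l : ℕ) (i : Fin n) :
    subgroupCenter H ≤ Subgroup.centralizer {a l i} := fun _ hz =>
  H_le_centralizer_a hw l i hz.1

lemma center_le_centralizer_b (hw : IsHWitnessSeq H n a b) (l : ℕ) :
    subgroupCenter H ≤ Subgroup.centralizer {b l} := by
  intro z hz
  rw [Subgroup.mem_centralizer_singleton_iff]
  have hHz : H ≤ Subgroup.centralizer {z} := by
    intro h hh
    rw [Subgroup.mem_centralizer_singleton_iff]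
    exact Subgroup.mem_centralizer_iff.mp hz.2 h hh
  have := (hw l).2.1 z (memEnv_of_memH l hz.1) hHz
  rw [Subgroup.mem_centralizer_singleton_iff] at this
  exact this.symm

/-- `k < l` : `a k j` centralizes `b l`. -/
lemma a_mem_cb_of_lt (hw : IsHWitnessSeq H n a b) {k l : ℕ} (hkl : k < l) (j : Fin n) :
    a k j ∈ Subgroup.centralizer {b l} := by
  rw [Subgroup.mem_centralizer_singleton_iff]
  have := (hw l).2.1 (a k j) (memEnv_a hkl j) (H_le_centralizer_a hw k j)
  rw [Subgroup.mem_centralizer_singleton_iff] at this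
  exact this.symm

/-- `l < k` : `a k j` centralizes `b l`. -/
lemma a_mem_cb_of_gt (hw : IsHWitnessSeq H n a b) {k l : ℕ} (hlk : l < k) (j : Fin n) :
    a k j ∈ Subgroup.centralizer {b l} :=
  (hw k).1 j (b l) (memEnv_b hlk) (center_le_centralizer_b hw l)

/-- `l < k` : `a k j` commutes with `a l i`. -/
lemma a_comm_a (hw : IsHWitnessSeq H n a b) {k l : ℕ} (hlk : l < k) (i j : Fin n) :
    Commute (a l i) (a k j) := by
  have := (hw k).1 j (a l i) (memEnv_a hlk i) (center_le_centralizer_a hw l i)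
  rw [Subgroup.mem_centralizer_singleton_iff] at this
  exact this.symm

end Aux

theorem witness_seq_tp2_pattern {G : Type*} [Group G] (H : Subgroup G) (n : ℕ)
    (a : ℕ → Fin n → G) (b : ℕ → G) (hw : IsHWitnessSeq H n a b) :
    -- rows: the cosets a_{l,0} C_G(b_l), …, a_{l,n-1} C_G(b_l) are pairwise disjoint
    (∀ l : ℕ, ∀ i j : Fin n, i ≠ j →
      Disjoint (a l i • (Subgroup.centralizer {b l} : Set G))
               (a l j • (Subgroup.centralizer {b l} : Set G))) ∧
    -- columns: every finite "path" intersection is nonempty; indeed it contains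
    -- the product a_{m, f m} * a_{m-1, f (m-1)} * ⋯ * a_{0, f 0}
    (∀ m : ℕ, ∀ f : ℕ → Fin n,
      (∃ x : G, ∀ l ≤ m, x ∈ a l (f l) • (Subgroup.centralizer {b l} : Set G)) ∧
      (∀ l ≤ m,
        (((List.range (m + 1)).reverse.map (fun k => a k (f k))).prod ∈
          a l (f l) • (Subgroup.centralizer {b l} : Set G)))) := by
  constructor
  · -- rows
    intro l i j hij
    rw [Set.disjoint_left]
    rintro x hxi hxj
    rw [mem_leftCoset_iff] at hxi hxj
    have hmem : (a l i)⁻¹ * a l j ∈ Subgroup.centralizer {b l} := by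
      have : (a l i)⁻¹ * a l j =
          ((a l i)⁻¹ * x) * ((a l j)⁻¹ * x)⁻¹ := by group
      rw [this]
      exact mul_mem hxi (inv_mem hxj)
    rcases hij.lt_or_gt with h | h
    · exact (hw l).2.2 i j h hmem
    · exact (hw l).2.2 j i h (by simpa using inv_mem hmem)
  · -- columns
    intro m f
    have key : ∀ m : ℕ, ∀ l ≤ m,
        (((List.range (m + 1)).reverse.map (fun k => a k (f k))).prod ∈
          a l (f l) • (Subgroup.centralizer {b l} : Set G)) := by
      intro m
      induction m with
      | zero =>
        intro l hl
        interval_cases l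
        rw [mem_leftCoset_iff]
        have : List.range 1 = [0] := rfl
        rw [this]
        simpa using one_mem (Subgroup.centralizer {b 0})
      | succ m ih =>
        intro l hl
        have hsplit : ((List.range (m + 1 + 1)).reverse.map (fun k => a k (f k))).prod
            = a (m + 1) (f (m + 1)) *
              ((List.range (m + 1)).reverse.map (fun k => a k (f k))).prod := by
          rw [List.range_succ, List.reverse_append]
          simp
        rw [mem_leftCoset_iff, hsplit]
        rcases Nat.lt_or_ge l (m + 1) with hlm | hlm
        · have hcomm : Commute (a l (f l)) (a (m + 1) (f (m + 1))) :=
            a_comm_a hw hlm (f l) (f (m + 1))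
          have hrw : (a l (f l))⁻¹ * (a (m + 1) (f (m + 1)) *
              ((List.range (m + 1)).reverse.map (fun k => a k (f k))).prod)
              = a (m + 1) (f (m + 1)) * ((a l (f l))⁻¹ *
              ((List.range (m + 1)).reverse.map (fun k => a k (f k))).prod) := by
            rw [← mul_assoc, hcomm.inv_left.eq, mul_assoc]
          rw [hrw]
          exact mul_mem (a_mem_cb_of_gt hw hlm (f (m + 1)))
            ((mem_leftCoset_iff _).mp (ih l (Nat.lt_succ_iff.mp hlm)))
        · have hl' : l = m + 1 := le_antisymm hl hlm
          subst hl'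
          rw [← mul_assoc, inv_mul_cancel, one_mul]
          refine list_prod_mem ?_
          intro x hx
          simp only [List.mem_map, List.mem_reverse, List.mem_range] at hx
          obtain ⟨k, hk, rfl⟩ := hx
          exact a_mem_cb_of_lt hw hk (f k)
    exact ⟨⟨_, key m⟩, key m⟩
end

section
/- Let G be a group which has no TP₂-pattern for cosets of centralizers. Then for every subgroup H of G there exists n ∈ ℕ such that there is no H-witness sequence of width n in G. -/
open scoped Pointwise

/-- `G` admits a TP₂-pattern for cosets of centralizers, of width `n`. -/
def HasCosetTP2Pattern (G : Type*) [Group G] (n : ℕ) : Prop :=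
  ∃ (a : ℕ → Fin n → G) (b : ℕ → G),
    (∀ l : ℕ, ∀ i j : Fin n, i ≠ j →
      Disjoint (a l i • (Subgroup.centralizer {b l} : Set G))
               (a l j • (Subgroup.centralizer {b l} : Set G))) ∧
    (∀ m : ℕ, ∀ f : ℕ → Fin n, ∃ x : G, ∀ l ≤ m,
      x ∈ a l (f l) • (Subgroup.centralizer {b l} : Set G))

/-- `G` has no TP₂-pattern for cosets of centralizers. -/
def NoCosetTP2Pattern (G : Type*) [Group G] : Prop :=
  ∃ n : ℕ, ¬ HasCosetTP2Pattern G n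

theorem no_witness_seq_of_ntp2 {G : Type*} [Group G]
    (hG : NoCosetTP2Pattern G) (H : Subgroup G) :
    ∃ n : ℕ, ¬ ∃ (a : ℕ → Fin n → G) (b : ℕ → G), IsHWitnessSeq H n a b := by
  obtain ⟨n, hn⟩ := hG
  refine ⟨n, fun ⟨a, b, hw⟩ => hn ?_⟩
  have haMem : ∀ k l, k < l → ∀ j, a k j ∈ witnessEnv H a b l := fun k l hkl j =>
    Subgroup.subset_closure (Or.inr ⟨k, hkl, Or.inl ⟨j, rfl⟩⟩)
  have hbMem : ∀ k l, k < l → b k ∈ witnessEnv H a b l := fun k l hkl =>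
    Subgroup.subset_closure (Or.inr ⟨k, hkl, Or.inr rfl⟩)
  have hHMem : ∀ l, ∀ h ∈ H, h ∈ witnessEnv H a b l := fun l h hh =>
    Subgroup.subset_closure (Or.inl hh)
  -- Z(H) centralizes every element of H
  have hZle : ∀ g ∈ H, subgroupCenter H ≤ Subgroup.centralizer {g} := by
    intro g hg z hz
    rw [Subgroup.mem_centralizer_singleton_iff]
    exact (Subgroup.mem_centralizer_iff.1 hz.2 g hg).symm
  -- every a l i centralizes H
  have haH : ∀ l i, H ≤ Subgroup.centralizer {a l i} := by
    intro l i h hh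
    have := (hw l).1 i h (hHMem l h hh) (hZle h hh)
    rw [Subgroup.mem_centralizer_singleton_iff] at this ⊢
    exact this.symm
  have haZ : ∀ l i, subgroupCenter H ≤ Subgroup.centralizer {a l i} :=
    fun l i => le_trans (fun z hz => hz.1) (haH l i)
  -- Z(H) centralizes every b l
  have hbZ : ∀ l, subgroupCenter H ≤ Subgroup.centralizer {b l} := by
    intro l z hz
    have hH : H ≤ Subgroup.centralizer {z} := by
      intro h hh
      rw [Subgroup.mem_centralizer_singleton_iff]
      exact Subgroup.mem_centralizer_iff.1 hz.2 h hh
    have := (hw l).2.1 z (hHMem l z hz.1) hH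
    rw [Subgroup.mem_centralizer_singleton_iff] at this ⊢
    exact this.symm
  -- a k j commutes with b l whenever k ≠ l
  have hab : ∀ k l, k ≠ l → ∀ j, a k j ∈ Subgroup.centralizer {b l} := by
    intro k l hkl j
    rcases lt_or_gt_of_ne hkl with h | h
    · have := (hw l).2.1 (a k j) (haMem k l h j) (haH k j)
      rw [Subgroup.mem_centralizer_singleton_iff] at this ⊢
      exact this.symm
    · exact (hw k).1 j (b l) (hbMem l k h) (hbZ l)
  -- a's from different rows commute
  have haa : ∀ k l i j, k < l → Commute (a k i) (a l j) := by
    intro k l i j h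
    have := (hw l).1 j (a k i) (haMem k l h i) (haZ k i)
    rw [Subgroup.mem_centralizer_singleton_iff] at this
    exact this.symm
  refine ⟨a, b, ?_, ?_⟩
  · -- disjointness of the rows
    intro l i j hij
    rw [Set.disjoint_left]
    rintro x hxi hxj
    rw [mem_leftCoset_iff] at hxi hxj
    have hmem : (a l i)⁻¹ * a l j ∈ Subgroup.centralizer {b l} := by
      have := mul_mem hxi (inv_mem hxj)
      simpa [mul_assoc] using this
    rcases hij.lt_or_gt with h | h
    · exact (hw l).2.2 i j h hmem
    · exact (hw l).2.2 j i h (by simpa [mul_inv_rev] using inv_mem hmem)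
  · -- the column intersections are nonempty
    intro m f
    set p : ℕ → G := fun m => ((List.range (m + 1)).map fun k => a k (f k)).prod with hp
    have hstep : ∀ m, p (m + 1) = p m * a (m + 1) (f (m + 1)) := by
      intro m; simp [hp, List.range_succ]
    have hzero : p 0 = a 0 (f 0) := by simp [hp, List.range_succ]
    have hA : ∀ m l, m < l → p m ∈ Subgroup.centralizer {b l} := by
      intro m
      induction m with
      | zero =>
        intro l hl
        rw [hzero]
        exact hab 0 l (Nat.ne_of_lt hl) (f 0)
      | succ m ih =>
        intro l hl
        rw [hstep]
        exact mul_mem (ih l (lt_trans (Nat.lt_succ_self m) hl))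
          (hab (m + 1) l (Nat.ne_of_lt hl) (f (m + 1)))
    have hB : ∀ m l i, m < l → Commute (p m) (a l i) := by
      intro m
      induction m with
      | zero =>
        intro l i hl
        rw [hzero]
        exact haa 0 l (f 0) i hl
      | succ m ih =>
        intro l i hl
        rw [hstep]
        exact Commute.mul_left (ih l i (lt_trans (Nat.lt_succ_self m) hl))
          (haa (m + 1) l (f (m + 1)) i hl)
    have hC : ∀ m l, l ≤ m → (a l (f l))⁻¹ * p m ∈ Subgroup.centralizer {b l} := by
      intro m
      induction m with
      | zero =>
        intro l hl
        obtain rfl : l = 0 := Nat.le_zero.1 hl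
        rw [hzero, inv_mul_cancel]
        exact one_mem _
      | succ m ih =>
        intro l hl
        rcases Nat.lt_succ_iff_lt_or_eq.1 (Nat.lt_succ_of_le hl) with h | rfl
        · rw [hstep, ← mul_assoc]
          exact mul_mem (ih l (Nat.lt_succ_iff.1 h)) (hab (m + 1) l (by omega) (f (m + 1)))
        · rw [hstep, (hB m (m + 1) (f (m + 1)) (Nat.lt_succ_self m)).eq, ← mul_assoc,
            inv_mul_cancel, one_mul]
          exact hA m (m + 1) (Nat.lt_succ_self m)
    exact ⟨p m, fun l hl => (mem_leftCoset_iff _).2 (hC m l hl)⟩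
end

section
/- Let G be a group and H an abelian subgroup of G. Suppose that G has no TP₂-pattern for cosets of centralizers and that G is H-centralizer-saturated. Then there exist a finite subset F ⊆ {g ∈ G : H ⊆ C_G(g)} and a natural number n such that the subgroup A := ⋂_{g∈F} C_G(g) contains H and satisfies [A : C_A(a)] ≤ n for every a ∈ A; in particular the derived subgroup [A,A] is finite, so A is finite-by-abelian. -/
open scoped Pointwise

/-- The condition on `a₀, …, aₙ, b` relative to a parameter set `F`:
each `aᵢ` centralizes every `g ∈ F` with `Z(H) ⊆ C_G(g)`, `b` centralizes every
`g ∈ F` with `H ⊆ C_G(g)`, and the `aᵢ` lie in pairwise distinct cosets of `C_G(b)`. -/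
def WitnessTriple {G : Type*} [Group G] (H : Subgroup G) (n : ℕ)
    (F : Set G) (a : Fin (n + 1) → G) (b : G) : Prop :=
  (∀ i : Fin (n + 1), ∀ g ∈ F,
      subgroupCenter H ≤ Subgroup.centralizer {g} → a i ∈ Subgroup.centralizer {g}) ∧
  (∀ g ∈ F, H ≤ Subgroup.centralizer {g} → b ∈ Subgroup.centralizer {g}) ∧
  (∀ i j : Fin (n + 1), i < j → (a i)⁻¹ * a j ∉ Subgroup.centralizer {b})

/-- `G` is `H`-centralizer-saturated: for every `n` and every `S ⊆ G` of size at most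
`max(|H|, ℵ₀)`, if the witness condition is realized over every finite subset of `S`,
then it is realized over `S` itself. -/
def CentralizerSaturated (G : Type*) [Group G] (H : Subgroup G) : Prop :=
  ∀ (n : ℕ) (S : Set G), Cardinal.mk S ≤ max (Cardinal.mk H) Cardinal.aleph0 →
    (∀ F : Finset G, ↑F ⊆ S → ∃ (a : Fin (n + 1) → G) (b : G), WitnessTriple H n ↑F a b) →
    ∃ (a : Fin (n + 1) → G) (b : G), WitnessTriple H n S a b


section AuxiliaryNeumann

open Subgroup
open scoped Pointwise
open scoped commutatorElement

section Dietzmann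
variable {G : Type*} [Group G]
variable (m : ℕ)


variable (m : ℕ)

/-- Horner encoding of a word over `Fin m`, most significant letter first. -/
def nuval (l : List (Fin m)) : ℕ :=
  l.foldl (fun acc i => acc * (m+1) + i.val) 0

lemma foldl_horner (l : List (Fin m)) (acc : ℕ) :
    l.foldl (fun acc i => acc * (m+1) + i.val) acc
      = acc * (m+1)^(l.length) + nuval m l := by
  induction l generalizing acc with
  | nil => simp [nuval]
  | cons x t ih =>
    show List.foldl _ (acc * (m+1) + (x:ℕ)) t = _
    rw [ih (acc * (m+1) + x)]
    have h2 : nuval m (x :: t) = ((0:ℕ) * (m+1) + (x:ℕ)) * (m+1)^(t.length) + nuval m t := by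
      show List.foldl _ _ _ = _
      rw [List.foldl_cons, ih]
    rw [h2]
    simp only [List.length_cons]
    ring

lemma nuval_cons (x : Fin m) (t : List (Fin m)) :
    nuval m (x :: t) = (x : ℕ) * (m+1)^(t.length) + nuval m t := by
  show List.foldl _ _ _ = _
  rw [List.foldl_cons, foldl_horner]
  simp

lemma nuval_append (l l' : List (Fin m)) :
    nuval m (l ++ l') = nuval m l * (m+1)^(l'.length) + nuval m l' := by
  unfold nuval
  rw [List.foldl_append]
  exact foldl_horner m l' _

lemma nuval_lt (l : List (Fin m)) : nuval m l < (m+1)^(l.length) := by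
  induction l with
  | nil => simp [nuval]
  | cons x t ih =>
    rw [nuval_cons, List.length_cons, pow_succ]
    have hx : (x : ℕ) + 1 ≤ m + 1 := Nat.succ_le_succ (le_of_lt x.isLt)
    calc (x:ℕ) * (m+1)^t.length + nuval m t
        < (x:ℕ) * (m+1)^t.length + (m+1)^t.length := by omega
      _ = ((x:ℕ)+1) * (m+1)^t.length := by ring
      _ ≤ (m+1) * (m+1)^t.length := Nat.mul_le_mul_right _ hx
      _ = (m+1)^t.length * (m+1) := by ring

lemma nuval_swap_lt (A t₁ t₂ : List (Fin m)) (a b : Fin m)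
    (hlen : t₁.length = t₂.length) (hab : b < a) :
    nuval m (A ++ b :: t₂) < nuval m (A ++ a :: t₁) := by
  rw [nuval_append, nuval_append]
  have hl : (b :: t₂ : List (Fin m)).length = (a :: t₁ : List (Fin m)).length := by
    simp [hlen]
  rw [hl]
  have hcore : nuval m (b :: t₂) < nuval m (a :: t₁) := by
    rw [nuval_cons, nuval_cons, hlen]
    have h2 := nuval_lt m t₂
    have hba : (b:ℕ) + 1 ≤ (a:ℕ) := hab
    calc (b:ℕ) * (m+1)^t₂.length + nuval m t₂
        < (b:ℕ) * (m+1)^t₂.length + (m+1)^t₂.length := by omega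
      _ = ((b:ℕ)+1) * (m+1)^t₂.length := by ring
      _ ≤ (a:ℕ) * (m+1)^t₂.length := Nat.mul_le_mul_right _ hba
      _ ≤ (a:ℕ) * (m+1)^t₂.length + nuval m t₁ := Nat.le_add_right _ _
  omega

/-- sorted decomposition: all copies of `i` are contiguous in a sorted list. -/
lemma sorted_decomp : ∀ (l : List (Fin m)), l.Pairwise (· ≤ ·) → ∀ i : Fin m,
    ∃ A B : List (Fin m), l = A ++ List.replicate (l.count i) i ++ B ∧
      (∀ x ∈ A, x ≠ i) ∧ (∀ x ∈ B, x ≠ i) := by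
  intro l
  induction l with
  | nil => intro _ i; exact ⟨[], [], by simp, by simp, by simp⟩
  | cons a t ih =>
    intro hp i
    have ha : ∀ b ∈ t, a ≤ b := fun b hb => (List.pairwise_cons.mp hp).1 b hb
    have ht : t.Pairwise (· ≤ ·) := (List.pairwise_cons.mp hp).2
    by_cases hai : a = i
    · subst hai
      by_cases hc : t.count a = 0
      · refine ⟨[], t, ?_, by simp, ?_⟩
        · have h1 : (a :: t).count a = 1 := by
            rw [List.count_cons_self, hc]
          rw [h1]
          simp
        · intro x hx hxa
          subst hxa
          exact (List.count_eq_zero.mp hc) hx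
      · obtain ⟨A, B, hAB, hAfree, hBfree⟩ := ih ht a
        have hAnil : A = [] := by
          rcases A with _ | ⟨x, A'⟩
          · rfl
          · exfalso
            have hxA : x ∈ (x :: A') := List.mem_cons_self
            have hxi : x ≠ a := hAfree x hxA
            have hxt : x ∈ t := by rw [hAB]; simp
            have h1 : a ≤ x := ha x hxt
            have h2 : x ≤ a := by
              have ht2 := ht
              rw [hAB, List.append_assoc] at ht2
              have hpa := (List.pairwise_append.mp ht2).2.2
              apply hpa x List.mem_cons_self
              apply List.mem_append.mpr
              left
              rw [List.mem_replicate]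
              exact ⟨hc, rfl⟩
            exact hxi (le_antisymm h2 h1)
        subst hAnil
        refine ⟨[], B, ?_, by simp, hBfree⟩
        rw [List.count_cons_self]
        simp only [List.nil_append] at hAB ⊢
        rw [List.replicate_succ, List.cons_append]
        rw [← hAB]
    · obtain ⟨A, B, hAB, hAfree, hBfree⟩ := ih ht i
      refine ⟨a :: A, B, ?_, ?_, hBfree⟩
      · rw [List.count_cons_of_ne hai]
        rw [List.cons_append, List.cons_append, ← hAB]
      · intro x hx
        rcases List.mem_cons.mp hx with h | h
        exacts [h ▸ hai, hAfree x h]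

end Dietzmann


section DietzmannMain
variable {G : Type*} [Group G]

lemma exists_descent {α : Type*} [LinearOrder α] : ∀ (l : List α), ¬ l.Pairwise (· ≤ ·) →
    ∃ (A B : List α) (a b : α), l = A ++ a :: b :: B ∧ b < a := by
  intro l
  induction l with
  | nil => intro h; exact absurd List.Pairwise.nil h
  | cons x t ih =>
    intro h
    match t, ih with
    | [], _ => exact absurd (List.pairwise_singleton _ _) h
    | y :: t', ih =>
      by_cases hxy : y < x
      · exact ⟨[], t', x, y, by simp, hxy⟩
      · push_neg at hxy
        by_cases hp : (y :: t').Pairwise (· ≤ ·)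
        · exfalso
          apply h
          refine List.pairwise_cons.mpr ⟨?_, hp⟩
          intro b hb
          rcases List.mem_cons.mp hb with rfl | hb'
          · exact hxy
          · exact hxy.trans ((List.pairwise_cons.mp hp).1 b hb')
        · obtain ⟨A, B, a, b, hAB, hba⟩ := ih hp
          exact ⟨x :: A, B, a, b, by rw [List.cons_append, hAB], hba⟩

lemma closure_normal_of_conjInvariant (X : Set G)
    (hconj : ∀ x ∈ X, ∀ g : G, g * x * g⁻¹ ∈ X) : (Subgroup.closure X).Normal := by
  constructor
  intro n hn g
  have hmap : (Subgroup.closure X).map (MulAut.conj g).toMonoidHom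
      = Subgroup.closure ((MulAut.conj g).toMonoidHom '' X) :=
    MonoidHom.map_closure _ _
  have hsub : (MulAut.conj g).toMonoidHom '' X ⊆ X := by
    rintro _ ⟨x, hx, rfl⟩
    simpa [MulAut.conj_apply, mul_assoc] using hconj x hx g
  have hle : (Subgroup.closure X).map (MulAut.conj g).toMonoidHom ≤ Subgroup.closure X := by
    rw [hmap]
    exact Subgroup.closure_mono hsub |>.trans (le_of_eq rfl)
  have : g * n * g⁻¹ ∈ (Subgroup.closure X).map (MulAut.conj g).toMonoidHom := by
    refine ⟨n, hn, ?_⟩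
    simp [MulAut.conj_apply, mul_assoc]
  exact hle this

theorem dietzmann (X : Set G) (hfin : X.Finite)
    (hconj : ∀ x ∈ X, ∀ g : G, g * x * g⁻¹ ∈ X)
    (htor : ∀ x ∈ X, IsOfFinOrder x) :
    ((Subgroup.closure X : Subgroup G) : Set G).Finite := by
  classical
  rcases X.eq_empty_or_nonempty with rfl | hne
  · rw [Subgroup.closure_empty]
    simpa using Set.finite_singleton (1 : G)
  set s : Finset G := hfin.toFinset with hs
  set m : ℕ := s.card with hmdef
  have hm1 : 1 ≤ m := Finset.card_pos.mpr (by
    obtain ⟨x, hx⟩ := hne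
    exact ⟨x, by simp [hs, hfin.mem_toFinset, hx]⟩)
  set χ : Fin m → G := fun i => ((s.equivFin.symm i) : G) with hχ
  have hχX : ∀ i, χ i ∈ X := fun i => hfin.mem_toFinset.mp (s.equivFin.symm i).2
  have hsurj : ∀ x ∈ X, ∃ i, χ i = x := by
    intro x hx
    refine ⟨s.equivFin ⟨x, by simp [hs, hfin.mem_toFinset, hx]⟩, ?_⟩
    simp [hχ]
  set e : Fin m → ℕ := fun i => orderOf (χ i) with he
  have he1 : ∀ i, 1 ≤ e i := fun i => (htor _ (hχX i)).orderOf_pos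
  have hepow : ∀ i, χ i ^ e i = 1 := fun i => pow_orderOf_eq_one (χ i)
  have hcidx : ∀ i j : Fin m, ∃ k, χ k = (χ j)⁻¹ * χ i * χ j := by
    intro i j
    have := hconj (χ i) (hχX i) (χ j)⁻¹
    rw [inv_inv] at this
    exact hsurj _ this
  choose cidx hcidxs using hcidx
  set prodW : List (Fin m) → G := fun l => (l.map χ).prod with hprodW
  set N₀ : ℕ := Finset.univ.sum e with hN₀
  set Good : Set G := prodW '' {l : List (Fin m) | l.length < N₀} with hGoodDef
  have hGoodFin : Good.Finite := (List.finite_length_lt (Fin m) N₀).image _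
  -- main rewriting lemma
  have key : ∀ (k : ℕ) (l : List (Fin m)), (m+1)^(2*l.length+2) + nuval m l ≤ k →
      prodW l ∈ Good := by
    intro k
    induction k using Nat.strong_induction_on with
    | _ k ih =>
      intro l hμ
      by_cases hlen : l.length < N₀
      · exact ⟨l, hlen, rfl⟩
      · by_cases hsort : l.Pairwise (· ≤ ·)
        · -- sorted: some letter occurs at least its order many times
          have hcount : ∃ i, e i ≤ l.count i := by
            by_contra hcon
            push_neg at hcon
            apply hlen
            have hlm : l.length = ∑ a ∈ (l : Multiset (Fin m)).toFinset,
                (l : Multiset (Fin m)).count a := by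
              rw [Multiset.toFinset_sum_count_eq]
              simp
            have hle1 : l.length ≤ ∑ a ∈ (l : Multiset (Fin m)).toFinset, (e a - 1) := by
              rw [hlm]
              apply Finset.sum_le_sum
              intro a _
              have := hcon a
              have hca : (l : Multiset (Fin m)).count a = l.count a := by
                simp [Multiset.coe_count]
              omega
            have hle2 : ∑ a ∈ (l : Multiset (Fin m)).toFinset, (e a - 1)
                ≤ ∑ a ∈ Finset.univ, (e a - 1) :=
              Finset.sum_le_sum_of_subset (Finset.subset_univ _)
            have hlt : ∑ a ∈ (Finset.univ : Finset (Fin m)), (e a - 1) < N₀ := by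
              rw [hN₀]
              apply Finset.sum_lt_sum_of_nonempty
              · exact Finset.univ_nonempty_iff.mpr ⟨⟨0, hm1⟩⟩
              · intro i _
                have h1 : 1 ≤ e i := he1 i
                have h2 : e i = orderOf (χ i) := rfl
                omega
            exact lt_of_le_of_lt (hle1.trans hle2) hlt
          obtain ⟨i, hi⟩ := hcount
          obtain ⟨A, B, hAB, _, _⟩ := sorted_decomp m l hsort i
          set c : ℕ := l.count i with hc
          set l' : List (Fin m) := A ++ List.replicate (c - e i) i ++ B with hl'
          have hprodeq : prodW l' = prodW l := by
            conv_rhs => rw [hAB]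
            simp only [hprodW, hl', List.map_append, List.prod_append, List.map_replicate,
              List.prod_replicate]
            have hsplit : χ i ^ c = χ i ^ (c - e i) * χ i ^ e i := by
              rw [← pow_add]
              congr 1
              omega
            rw [hsplit, hepow i, mul_one]
          have hlenlt : l'.length < l.length := by
            rw [hAB]
            simp only [hl', List.length_append, List.length_replicate]
            have := he1 i
            omega
          have hμ' : (m+1)^(2*l'.length+2) + nuval m l' < k := by
            have h1 : nuval m l' < (m+1)^(l'.length) := nuval_lt m l'
            have h2 : (m+1)^(l'.length) ≤ (m+1)^(2*l'.length+2) :=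
              Nat.pow_le_pow_right (by omega) (by omega)
            have h3 : (m+1)^(2*l'.length+2) + (m+1)^(2*l'.length+2) ≤ (m+1)^(2*l'.length+3) := by
              have : (m+1)^(2*l'.length+3) = (m+1)^(2*l'.length+2) * (m+1) := by ring
              rw [this]
              have hm2 : 2 ≤ m + 1 := by omega
              nlinarith [Nat.pow_pos (n := 2*l'.length+2) (show 0 < m+1 by omega)]
            have h4 : (m+1)^(2*l'.length+3) ≤ (m+1)^(2*l.length+2) :=
              Nat.pow_le_pow_right (by omega) (by omega)
            omega
          have := ih ((m+1)^(2*l'.length+2) + nuval m l') hμ' l' le_rfl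
          rwa [hprodeq] at this
        · -- not sorted: adjacent descent, swap
          obtain ⟨A, B, a, b, hdecomp, hba⟩ := exists_descent l hsort
          set l' : List (Fin m) := A ++ b :: cidx a b :: B with hl'
          have hprodeq : prodW l' = prodW l := by
            conv_rhs => rw [hdecomp]
            simp only [hprodW, hl', List.map_append, List.prod_append, List.map_cons,
              List.prod_cons]
            have hkey : χ b * χ (cidx a b) = χ a * χ b := by
              rw [hcidxs a b]
              group
            simp only [← mul_assoc]
            congr 1
            rw [mul_assoc, mul_assoc, hkey]
          have hleneq : l'.length = l.length := by
            conv_rhs => rw [hdecomp]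
            simp [hl']
          have hνlt : nuval m l' < nuval m l := by
            conv_rhs => rw [hdecomp]
            exact nuval_swap_lt m A (b :: B) (cidx a b :: B) a b (by simp) hba
          have hμ' : (m+1)^(2*l'.length+2) + nuval m l' < k := by
            rw [hleneq]
            omega
          have := ih _ hμ' l' le_rfl
          rwa [hprodeq] at this
  -- the set of all products of letters is a subgroup
  have hinvmem : ∀ l : List (Fin m), ∃ l', prodW l' = (prodW l)⁻¹ := by
    intro l
    induction l with
    | nil => exact ⟨[], by simp [hprodW]⟩
    | cons x t ih =>
      obtain ⟨lt', hlt'⟩ := ih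
      refine ⟨lt' ++ List.replicate (e x - 1) x, ?_⟩
      simp only [hprodW, List.map_append, List.prod_append, List.map_replicate,
        List.prod_replicate, List.map_cons, List.prod_cons] at hlt' ⊢
      rw [hlt', mul_inv_rev]
      congr 1
      have hx1 : χ x * χ x ^ (e x - 1) = 1 := by
        have : χ x * χ x ^ (e x - 1) = χ x ^ (e x) := by
          rw [← pow_succ']
          congr 1
          have := he1 x
          omega
        rw [this, hepow]
      exact (inv_eq_of_mul_eq_one_right hx1).symm
  set Q : Subgroup G := {
    carrier := Set.range prodW
    one_mem' := ⟨[], by simp [hprodW]⟩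
    mul_mem' := by
      rintro x y ⟨l1, rfl⟩ ⟨l2, rfl⟩
      exact ⟨l1 ++ l2, by simp [hprodW]⟩
    inv_mem' := by
      rintro x ⟨l, rfl⟩
      obtain ⟨l', hl'⟩ := hinvmem l
      exact ⟨l', hl'⟩ } with hQ
  have hXQ : X ⊆ Q := by
    intro x hx
    obtain ⟨i, rfl⟩ := hsurj x hx
    exact ⟨[i], by simp [hprodW]⟩
  have hclos : (Subgroup.closure X : Set G) ⊆ Good := by
    intro g hg
    have : g ∈ Q := (Subgroup.closure_le Q).mpr hXQ hg
    obtain ⟨l, rfl⟩ := this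
    exact key _ l le_rfl
  exact hGoodFin.subset hclos


/-- slide a central element through. -/
lemma central_slide {z : G} (hz : ∀ x : G, Commute z x) (g X : G) :
    g * (z * X) = z * (g * X) := by
  rw [← mul_assoc, ← (hz g).eq, mul_assoc]

lemma commutatorElement_central_left {z : G} (hz : ∀ x : G, Commute z x) (a b : G) :
    ⁅z * a, b⁆ = ⁅a, b⁆ := by
  have hz' : ∀ x : G, Commute z⁻¹ x := fun x => (hz x).inv_left
  simp only [commutatorElement_def, mul_inv_rev, mul_assoc]
  rw [central_slide hz' a⁻¹ b⁻¹, central_slide hz' b _, central_slide hz' a _,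
    ← mul_assoc, mul_inv_cancel, one_mul]

lemma commutatorElement_central_right {w : G} (hw : ∀ x : G, Commute w x) (a b : G) :
    ⁅a, w * b⁆ = ⁅a, b⁆ := by
  have h1 : ⁅a, w * b⁆⁻¹ = ⁅a, b⁆⁻¹ := by
    rw [commutatorElement_inv, commutatorElement_inv, commutatorElement_central_left hw]
  exact inv_injective h1

/-- the conjugation orbit of an element with finite-index centralizer is finite -/
lemma finite_conjOrbit (c : G) [h : (Subgroup.centralizer ({c} : Set G)).FiniteIndex] :
    (Set.range fun g : G => g * c * g⁻¹).Finite := by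
  classical
  set C : Subgroup G := Subgroup.centralizer ({c} : Set G) with hC
  have : (Set.range fun g : G => g * c * g⁻¹) ⊆
      Set.range (fun q : G ⧸ C => q.out * c * q.out⁻¹) := by
    rintro _ ⟨g, rfl⟩
    refine ⟨QuotientGroup.mk g, ?_⟩
    obtain ⟨z, hz⟩ := QuotientGroup.mk_out_eq_mul C g
    dsimp only
    rw [hz]
    have hzc : c * (z : G) = (z : G) * c := Subgroup.mem_centralizer_iff.mp z.2 c rfl
    simp only [mul_inv_rev, mul_assoc]
    congr 1
    simp only [← mul_assoc]
    rw [← hzc, mul_assoc c, mul_inv_cancel, mul_one]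
  exact (Set.finite_range _).subset this

/-- commutators against a fixed element form a finite set -/
lemma finite_commRange (t : G) [h : (Subgroup.centralizer ({t} : Set G)).FiniteIndex] :
    (Set.range fun g : G => ⁅g, t⁆).Finite := by
  have hsub : (Set.range fun g : G => ⁅g, t⁆) ⊆
      (fun w => w * t⁻¹) '' (Set.range fun g : G => g * t * g⁻¹) := by
    rintro _ ⟨g, rfl⟩
    exact ⟨g * t * g⁻¹, ⟨g, rfl⟩, by simp [commutatorElement_def, mul_assoc]⟩
  exact ((finite_conjOrbit t).image _).subset hsub

/-- in a group where all centralizers have finite index, every commutator has finite order -/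
lemma commutator_isOfFinOrder
    (hidx : ∀ g : G, (Subgroup.centralizer ({g} : Set G)).FiniteIndex) (x y : G) :
    IsOfFinOrder ⁅x, y⁆ := by
  classical
  set K : Subgroup G := Subgroup.closure ({x, y} : Set G) with hK
  haveI := hidx x
  haveI := hidx y
  have hxK : x ∈ K := Subgroup.subset_closure (by simp)
  have hyK : y ∈ K := Subgroup.subset_closure (by simp)
  -- the centralizer of x and y inside K is central in K
  have hcent : (Subgroup.centralizer {x} ⊓ Subgroup.centralizer {y}).subgroupOf K ≤
      Subgroup.center K := by
    rintro ⟨k, hkK⟩ hk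
    rw [Subgroup.mem_subgroupOf] at hk
    rw [Subgroup.mem_center_iff]
    rintro ⟨g, hgK⟩
    have hgC : g ∈ Subgroup.centralizer ({k} : Set G) := by
      have hle : K ≤ Subgroup.centralizer ({k} : Set G) := by
        rw [hK, Subgroup.closure_le]
        rintro a (rfl | rfl)
        · rw [SetLike.mem_coe, Subgroup.mem_centralizer_iff]
          rintro h rfl
          exact (Subgroup.mem_centralizer_iff.mp hk.1 _ rfl).symm
        · simp only [Set.mem_singleton_iff] at *
          rw [SetLike.mem_coe, Subgroup.mem_centralizer_iff]
          rintro h rfl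
          exact (Subgroup.mem_centralizer_iff.mp hk.2 _ rfl).symm
      exact hle hgK
    have := Subgroup.mem_centralizer_iff.mp hgC k rfl
    exact Subtype.ext (by simpa using this.symm)
  haveI : ((Subgroup.centralizer {x} ⊓ Subgroup.centralizer {y}).subgroupOf K).FiniteIndex :=
    Subgroup.instFiniteIndex_subgroupOf _ _
  haveI : (Subgroup.center K).FiniteIndex := Subgroup.finiteIndex_of_le hcent
  -- commutators in K are finite in number
  haveI : Finite (commutatorSet K) := by
    have hsub : commutatorSet K ⊆
        Set.range (fun p : (K ⧸ Subgroup.center K) × (K ⧸ Subgroup.center K) =>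
          ⁅p.1.out, p.2.out⁆) := by
      rintro _ ⟨a, b, rfl⟩
      refine ⟨(QuotientGroup.mk a, QuotientGroup.mk b), ?_⟩
      obtain ⟨z, hz⟩ := QuotientGroup.mk_out_eq_mul (Subgroup.center K) a
      obtain ⟨w, hw⟩ := QuotientGroup.mk_out_eq_mul (Subgroup.center K) b
      simp only [hz, hw]
      have hzc : ∀ u : K, Commute (z : K) u := fun u =>
        ((Subgroup.mem_center_iff.mp z.2) u).symm
      have hwc : ∀ u : K, Commute (w : K) u := fun u =>
        ((Subgroup.mem_center_iff.mp w.2) u).symm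
      -- ⁅a * z, b * w⁆ = ⁅a, b⁆
      have h1 : ⁅a * (z : K), b * (w : K)⁆ = ⁅(z:K) * a, (w:K) * b⁆ := by
        rw [(hzc a).eq, (hwc b).eq]
      rw [h1, commutatorElement_central_left hzc, commutatorElement_central_right hwc]
    exact Finite.Set.subset _ hsub
  haveI : Finite (_root_.commutator K) := inferInstance
  -- now ⁅x,y⁆ is the image of an element of the finite group commutator K
  have hmem : ⁅(⟨x, hxK⟩ : K), (⟨y, hyK⟩ : K)⁆ ∈ _root_.commutator K := by
    rw [_root_.commutator]
    exact Subgroup.commutator_mem_commutator (Subgroup.mem_top _) (Subgroup.mem_top _)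
  have hfin : IsOfFinOrder (⟨⁅(⟨x, hxK⟩ : K), (⟨y, hyK⟩ : K)⁆, hmem⟩ : _root_.commutator K) :=
    isOfFinOrder_of_finite _
  have hfin2 := ((K.subtype).comp (_root_.commutator K).subtype).isOfFinOrder hfin
  simpa [commutatorElement_def] using hfin2

lemma lemmaF (hidx : ∀ g : G, (Subgroup.centralizer ({g} : Set G)).FiniteIndex)
    (D : Subgroup G) [hD : D.FiniteIndex]
    (hDfin : ((⁅D, D⁆ : Subgroup G) : Set G).Finite) :
    ((⁅(⊤ : Subgroup G), (⊤ : Subgroup G)⁆ : Subgroup G) : Set G).Finite := by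
  classical
  set T : Set G := Set.range (fun q : G ⧸ D => q.out) with hT
  have hTfin : T.Finite := Set.finite_range _
  set Y₀ : Set G := ⋃ t ∈ T, Set.range (fun g : G => ⁅g, t⁆) with hY₀
  have hY₀fin : Y₀.Finite :=
    hTfin.biUnion (fun t _ => by haveI := hidx t; exact finite_commRange t)
  set Y : Set G := ⋃ y ∈ Y₀, Set.range (fun g : G => g * y * g⁻¹) with hY
  have hYfin : Y.Finite :=
    hY₀fin.biUnion (fun y _ => by haveI := hidx y; exact finite_conjOrbit y)
  have hY₀Y : Y₀ ⊆ Y := fun y hy => Set.mem_biUnion hy ⟨1, by simp⟩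
  have hYconj : ∀ x ∈ Y, ∀ g : G, g * x * g⁻¹ ∈ Y := by
    intro x hx g
    rw [hY, Set.mem_iUnion₂] at hx
    obtain ⟨y, hy, g₀, rfl⟩ := hx
    rw [hY, Set.mem_iUnion₂]
    refine ⟨y, hy, g * g₀, ?_⟩
    simp only [mul_inv_rev]
    group
  have hYcomm : ∀ x ∈ Y, ∃ a b : G, x = ⁅a, b⁆ := by
    intro x hx
    rw [hY, Set.mem_iUnion₂] at hx
    obtain ⟨y, hy, g₀, rfl⟩ := hx
    rw [hY₀, Set.mem_iUnion₂] at hy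
    obtain ⟨t, _, g, rfl⟩ := hy
    exact ⟨g₀ * g * g₀⁻¹, g₀ * t * g₀⁻¹, conjugate_commutatorElement g t g₀⟩
  have hYtor : ∀ x ∈ Y, IsOfFinOrder x := by
    intro x hx
    obtain ⟨a, b, rfl⟩ := hYcomm x hx
    exact commutator_isOfFinOrder hidx a b
  set M : Subgroup G := Subgroup.closure Y with hM
  haveI hMnormal : M.Normal := closure_normal_of_conjInvariant Y hYconj
  have hMfin : (M : Set G).Finite := dietzmann Y hYfin hYconj hYtor
  set π : G →* G ⧸ M := QuotientGroup.mk' M with hπ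
  have hker : ∀ y ∈ Y₀, π y = 1 := fun y hy =>
    (QuotientGroup.eq_one_iff y).mpr (Subgroup.subset_closure (hY₀Y hy))
  have hcomm1 : ∀ t ∈ T, ∀ g : G, Commute (π t) (π g) := by
    intro t ht g
    have h1 : ⁅π g, π t⁆ = 1 := by
      rw [← map_commutatorElement]
      exact hker _ (Set.mem_biUnion ht ⟨g, rfl⟩)
    exact (commutatorElement_eq_one_iff_commute.mp h1).symm
  have hdec : ∀ g : G, ∃ t ∈ T, ∃ d ∈ D, g = t * d := by
    intro g
    obtain ⟨z, hz⟩ := QuotientGroup.mk_out_eq_mul D g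
    refine ⟨(QuotientGroup.mk g : G ⧸ D).out, ⟨_, rfl⟩, (z : G)⁻¹, D.inv_mem z.2, ?_⟩
    rw [hz]
    group
  have hsurj := QuotientGroup.mk'_surjective M
  have hcommle : (⁅(⊤ : Subgroup (G ⧸ M)), ⊤⁆ : Subgroup (G ⧸ M)) ≤ Subgroup.map π ⁅D, D⁆ := by
    rw [Subgroup.commutator_le]
    intro q1 _ q2 _
    obtain ⟨g1, rfl⟩ := hsurj q1
    obtain ⟨g2, rfl⟩ := hsurj q2
    obtain ⟨t1, ht1, d1, hd1, rfl⟩ := hdec g1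
    obtain ⟨t2, ht2, d2, hd2, rfl⟩ := hdec g2
    have hc1 : ∀ u : G ⧸ M, Commute (π t1) u := by
      intro u; obtain ⟨g, rfl⟩ := hsurj u; exact hcomm1 t1 ht1 g
    have hc2 : ∀ u : G ⧸ M, Commute (π t2) u := by
      intro u; obtain ⟨g, rfl⟩ := hsurj u; exact hcomm1 t2 ht2 g
    have hval : (QuotientGroup.mk' M) (t1 * d1) = π t1 * π d1 := by rw [map_mul]
    have hval2 : (QuotientGroup.mk' M) (t2 * d2) = π t2 * π d2 := by rw [map_mul]
    rw [hval, hval2, commutatorElement_central_left hc1, commutatorElement_central_right hc2,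
      ← map_commutatorElement]
    exact ⟨⁅d1, d2⁆, Subgroup.commutator_mem_commutator hd1 hd2, rfl⟩
  have hsub : ((⁅(⊤ : Subgroup G), (⊤ : Subgroup G)⁆ : Subgroup G) : Set G) ⊆
      ((⁅D, D⁆ : Subgroup G) : Set G) * (M : Set G) := by
    intro x hx
    have hq : π x ∈ Subgroup.map π ⁅D, D⁆ := by
      apply hcommle
      have h2 : π x ∈ Subgroup.map π ⁅(⊤ : Subgroup G), ⊤⁆ := ⟨x, hx, rfl⟩
      rw [Subgroup.map_commutator] at h2
      exact (Subgroup.commutator_mono le_top le_top) h2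
    obtain ⟨y, hy, hyx⟩ := hq
    have hmem : y⁻¹ * x ∈ M := by
      have h3 : (QuotientGroup.mk y : G ⧸ M) = QuotientGroup.mk x := hyx
      exact (QuotientGroup.eq).mp h3
    have h4 : x = y * (y⁻¹ * x) := by group
    rw [h4]
    exact Set.mul_mem_mul hy hmem
  exact (hDfin.mul hMfin).subset hsub


lemma conj_prod_fixed (yy : G) (L : List G) (h : ∀ a ∈ L, yy * a * yy⁻¹ = a) :
    yy * L.prod * yy⁻¹ = L.prod := by
  induction L with
  | nil => simp
  | cons a t ih =>
    rw [List.prod_cons]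
    have h2 : yy * (a * t.prod) * yy⁻¹ = (yy * a * yy⁻¹) * (yy * t.prod * yy⁻¹) := by group
    rw [h2, h a List.mem_cons_self, ih (fun b hb => h b (List.mem_cons_of_mem _ hb))]

lemma conj_prod_ofFn : ∀ {m : ℕ} (x : Fin m → G) (yy c : G) (k : Fin m),
    (∀ j : Fin m, j ≠ k → yy * x j * yy⁻¹ = x j) →
    (yy * x k * yy⁻¹ = x k * c) →
    (∀ j : Fin m, k < j → Commute c (x j)) →
    yy * (List.ofFn x).prod * yy⁻¹ = (List.ofFn x).prod * c := by
  intro m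
  induction m with
  | zero => intro x yy c k; exact k.elim0
  | succ m ih =>
    intro x yy c k hfix hk hpass
    rw [List.ofFn_succ, List.prod_cons]
    have hsplit : yy * (x 0 * (List.ofFn fun i : Fin m => x i.succ).prod) * yy⁻¹
        = (yy * x 0 * yy⁻¹) * (yy * (List.ofFn fun i : Fin m => x i.succ).prod * yy⁻¹) := by
      group
    rw [hsplit]
    rcases Fin.eq_zero_or_eq_succ k with rfl | ⟨k', rfl⟩
    · -- k = 0
      rw [hk]
      have hrest : yy * (List.ofFn fun i : Fin m => x i.succ).prod * yy⁻¹
          = (List.ofFn fun i : Fin m => x i.succ).prod := by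
        apply conj_prod_fixed
        intro a ha
        rw [List.mem_ofFn] at ha
        obtain ⟨i, rfl⟩ := ha
        exact hfix i.succ (Fin.succ_ne_zero i)
      rw [hrest]
      have hcommrest : Commute c (List.ofFn fun i : Fin m => x i.succ).prod := by
        apply Commute.list_prod_right
        intro a ha
        rw [List.mem_ofFn] at ha
        obtain ⟨i, rfl⟩ := ha
        exact hpass i.succ (Fin.succ_pos i)
      rw [mul_assoc, mul_assoc, ← hcommrest.eq]
    · -- k = succ k'
      rw [hfix 0 (Fin.succ_ne_zero k').symm]
      have := ih (fun i => x i.succ) yy c k'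
        (fun j hj => hfix j.succ (by simpa using hj))
        hk
        (fun j hj => hpass j.succ (by simpa using hj))
      rw [this, mul_assoc]

theorem bfc_commutator_finite (n : ℕ)
    (hidx : ∀ g : G, (Subgroup.centralizer ({g} : Set G)).index ≠ 0 ∧
      (Subgroup.centralizer ({g} : Set G)).index ≤ n) :
    ((⁅(⊤ : Subgroup G), (⊤ : Subgroup G)⁆ : Subgroup G) : Set G).Finite := by
  classical
  have hFI : ∀ g : G, (Subgroup.centralizer ({g} : Set G)).FiniteIndex :=
    fun g => ⟨(hidx g).1⟩
  by_contra hinf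
  have ext : ∀ k : ℕ, ∃ x y : Fin k → G,
      (∀ j l : Fin k, j < l → Commute (x j) (x l) ∧ Commute (x j) (y l) ∧
        Commute (y j) (x l) ∧ Commute (y j) (y l) ∧ Commute ⁅(x j)⁻¹, y j⁆ (x l)) ∧
      (∀ j l : Fin k, j < l → ⁅(x l)⁻¹, y l⁆ ≠ ⁅(x j)⁻¹, y j⁆) ∧
      (∀ j : Fin k, ⁅(x j)⁻¹, y j⁆ ≠ 1) := by
    intro k
    induction k with
    | zero =>
      exact ⟨Fin.elim0, Fin.elim0, fun j => j.elim0, fun j => j.elim0, fun j => j.elim0⟩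
    | succ k ih =>
      obtain ⟨x, y, hcomm, hne, hne1⟩ := ih
      set Xc : Set G := ⋃ j : Fin k, Set.range (fun g : G => g * ⁅(x j)⁻¹, y j⁆ * g⁻¹)
        with hXc
      have hXcfin : Xc.Finite := Set.finite_iUnion (fun j => by
        haveI := hFI ⁅(x j)⁻¹, y j⁆
        exact finite_conjOrbit _)
      have hXcconj : ∀ z ∈ Xc, ∀ g : G, g * z * g⁻¹ ∈ Xc := by
        intro z hz g
        rw [hXc, Set.mem_iUnion] at hz ⊢
        obtain ⟨j, g₀, rfl⟩ := hz
        refine ⟨j, g * g₀, ?_⟩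
        simp only [mul_inv_rev]
        group
      have hXctor : ∀ z ∈ Xc, IsOfFinOrder z := by
        intro z hz
        rw [hXc, Set.mem_iUnion] at hz
        obtain ⟨j, g₀, rfl⟩ := hz
        show IsOfFinOrder (g₀ * ⁅(x j)⁻¹, y j⁆ * g₀⁻¹)
        rw [conjugate_commutatorElement]
        exact commutator_isOfFinOrder hFI _ _
      set N : Subgroup G := Subgroup.closure Xc with hN
      have hNfin : (N : Set G).Finite := dietzmann Xc hXcfin hXcconj hXctor
      have hcN : ∀ j : Fin k, ⁅(x j)⁻¹, y j⁆ ∈ N := by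
        intro j
        apply Subgroup.subset_closure
        rw [hXc, Set.mem_iUnion]
        exact ⟨j, 1, by group⟩
      set D : Subgroup G :=
        (⨅ j : Fin k, (Subgroup.centralizer {x j} ⊓ Subgroup.centralizer {y j})) ⊓
        (⨅ z : hNfin.toFinset, Subgroup.centralizer {(z : G)}) with hD
      haveI hD1 : (⨅ j : Fin k,
          (Subgroup.centralizer {x j} ⊓ Subgroup.centralizer {y j})).FiniteIndex :=
        Subgroup.finiteIndex_iInf (fun j => by
          haveI := hFI (x j); haveI := hFI (y j); infer_instance)
      haveI hD2 : (⨅ z : hNfin.toFinset, Subgroup.centralizer {(z : G)}).FiniteIndex :=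
        Subgroup.finiteIndex_iInf (fun z => hFI (z : G))
      haveI hDFI : D.FiniteIndex := by rw [hD]; infer_instance
      have hfresh : ∃ d e : G, d ∈ D ∧ e ∈ D ∧ ⁅d, e⁆ ∉ N := by
        by_contra hcon
        push_neg at hcon
        have hle : (⁅D, D⁆ : Subgroup G) ≤ N :=
          (Subgroup.commutator_le).mpr (fun d hd e he => hcon d e hd he)
        have hfin : ((⁅D, D⁆ : Subgroup G) : Set G).Finite :=
          hNfin.subset (SetLike.coe_subset_coe.mpr hle)
        exact hinf (lemmaF hFI D hfin)
      obtain ⟨d, e, hdD, heD, hde⟩ := hfresh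
      -- memberships
      have hdC : ∀ j : Fin k, d ∈ Subgroup.centralizer {x j} ∧ d ∈ Subgroup.centralizer {y j} ∧
          e ∈ Subgroup.centralizer {x j} ∧ e ∈ Subgroup.centralizer {y j} := by
        intro j
        have h1 := (Subgroup.mem_inf.mp hdD).1
        have h2 := (Subgroup.mem_inf.mp heD).1
        rw [Subgroup.mem_iInf] at h1 h2
        exact ⟨(Subgroup.mem_inf.mp (h1 j)).1, (Subgroup.mem_inf.mp (h1 j)).2,
          (Subgroup.mem_inf.mp (h2 j)).1, (Subgroup.mem_inf.mp (h2 j)).2⟩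
      have hdN : ∀ z ∈ N, d ∈ Subgroup.centralizer {z} ∧ e ∈ Subgroup.centralizer {z} := by
        intro z hz
        have h1 := (Subgroup.mem_inf.mp hdD).2
        have h2 := (Subgroup.mem_inf.mp heD).2
        rw [Subgroup.mem_iInf] at h1 h2
        exact ⟨h1 ⟨z, hNfin.mem_toFinset.mpr hz⟩, h2 ⟨z, hNfin.mem_toFinset.mpr hz⟩⟩
      have hcentcomm : ∀ {a g : G}, g ∈ Subgroup.centralizer ({a} : Set G) → Commute a g :=
        fun h => Commute.symm (Subgroup.mem_centralizer_singleton_iff.mp h)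
      refine ⟨Fin.snoc x d⁻¹, Fin.snoc y e, ?_, ?_, ?_⟩
      · intro j l hjl
        induction l using Fin.lastCases with
        | last =>
          have hjval : (j : ℕ) < k := by
            have := hjl
            rw [Fin.lt_def] at this
            simpa using this
          obtain ⟨j', rfl⟩ : ∃ j' : Fin k, j'.castSucc = j :=
            ⟨⟨(j : ℕ), hjval⟩, by ext; simp⟩
          simp only [Fin.snoc_castSucc, Fin.snoc_last]
          refine ⟨(hcentcomm (hdC j').1).inv_right, hcentcomm (hdC j').2.2.1,
            (hcentcomm (hdC j').2.1).inv_right, hcentcomm (hdC j').2.2.2,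
            (hcentcomm (hdN _ (hcN j')).1).inv_right⟩
        | cast l' =>
          have hjval : (j : ℕ) < k := by
            have := hjl
            rw [Fin.lt_def] at this
            have := l'.isLt
            simp at *
            omega
          obtain ⟨j', rfl⟩ : ∃ j' : Fin k, j'.castSucc = j :=
            ⟨⟨(j : ℕ), hjval⟩, by ext; simp⟩
          have hjl' : j' < l' := by
            rw [Fin.lt_def] at hjl ⊢
            simpa using hjl
          simp only [Fin.snoc_castSucc]
          exact hcomm j' l' hjl'
      · intro j l hjl
        induction l using Fin.lastCases with
        | last =>
          have hjval : (j : ℕ) < k := by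
            have := hjl
            rw [Fin.lt_def] at this
            simpa using this
          obtain ⟨j', rfl⟩ : ∃ j' : Fin k, j'.castSucc = j :=
            ⟨⟨(j : ℕ), hjval⟩, by ext; simp⟩
          simp only [Fin.snoc_castSucc, Fin.snoc_last, inv_inv]
          intro heq
          exact hde (heq ▸ hcN j')
        | cast l' =>
          have hjval : (j : ℕ) < k := by
            have := hjl
            rw [Fin.lt_def] at this
            have := l'.isLt
            simp at *
            omega
          obtain ⟨j', rfl⟩ : ∃ j' : Fin k, j'.castSucc = j :=
            ⟨⟨(j : ℕ), hjval⟩, by ext; simp⟩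
          have hjl' : j' < l' := by
            rw [Fin.lt_def] at hjl ⊢
            simpa using hjl
          simp only [Fin.snoc_castSucc]
          exact hne j' l' hjl'
      · intro j
        induction j using Fin.lastCases with
        | last =>
          simp only [Fin.snoc_last, inv_inv]
          intro heq
          exact hde (heq ▸ N.one_mem)
        | cast j' =>
          simp only [Fin.snoc_castSucc]
          exact hne1 j'
  -- use a family of size n+1 to contradict the index bound
  obtain ⟨x, y, hcomm, hne, _⟩ := ext (n+1)
  set u : G := (List.ofFn x).prod with hu
  have hconj : ∀ kk : Fin (n+1), y kk * u * (y kk)⁻¹ = u * ⁅(x kk)⁻¹, y kk⁆ := by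
    intro kk
    refine conj_prod_ofFn x (y kk) ⁅(x kk)⁻¹, y kk⁆ kk ?_ ?_ ?_
    · intro j hj
      have hcyx : Commute (y kk) (x j) := by
        rcases lt_or_gt_of_ne hj with h | h
        · exact ((hcomm j kk h).2.1).symm
        · exact (hcomm kk j h).2.2.1
      rw [hcyx.eq, mul_assoc, mul_inv_cancel, mul_one]
    · simp only [commutatorElement_def]
      group
    · intro j hj
      exact (hcomm kk j hj).2.2.2.2
  haveI := hFI u
  have hinj : Function.Injective
      (fun kk : Fin (n+1) => (QuotientGroup.mk (y kk) : G ⧸ Subgroup.centralizer {u})) := by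
    intro j kk hjk
    by_contra hne'
    simp only at hjk
    have hz : (y j)⁻¹ * y kk ∈ Subgroup.centralizer ({u} : Set G) := (QuotientGroup.eq).mp hjk
    have huz : ((y j)⁻¹ * y kk) * u = u * ((y j)⁻¹ * y kk) :=
      Subgroup.mem_centralizer_singleton_iff.mp hz
    have hzuz : ((y j)⁻¹ * y kk) * u * ((y j)⁻¹ * y kk)⁻¹ = u := by
      rw [huz, mul_assoc, mul_inv_cancel, mul_one]
    have hconjeq : y kk * u * (y kk)⁻¹ = y j * u * (y j)⁻¹ := by
      have hstep : y kk * u * (y kk)⁻¹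
          = y j * (((y j)⁻¹ * y kk) * u * ((y j)⁻¹ * y kk)⁻¹) * (y j)⁻¹ := by
        group
      rw [hstep, hzuz]
    have heq2 : u * ⁅(x kk)⁻¹, y kk⁆ = u * ⁅(x j)⁻¹, y j⁆ := by
      rw [← hconj, ← hconj, hconjeq]
    have hceq : ⁅(x kk)⁻¹, y kk⁆ = ⁅(x j)⁻¹, y j⁆ := mul_left_cancel heq2
    rcases lt_or_gt_of_ne hne' with h | h
    · exact hne j kk h hceq
    · exact hne kk j h hceq.symm
  have hcard := Nat.card_le_card_of_injective _ hinj
  have hfin : Nat.card (Fin (n+1)) = n + 1 := by simp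
  have hidxu := (hidx u).2
  rw [Subgroup.index_eq_card] at hidxu
  omega


lemma relindex_bound_of_no_tuple {A : Subgroup G} {b : G} (n : ℕ)
    (h : ¬ ∃ a : Fin (n+1) → G, (∀ i, a i ∈ A) ∧
      (∀ i j : Fin (n+1), i < j → (a i)⁻¹ * a j ∉ Subgroup.centralizer ({b} : Set G))) :
    (Subgroup.centralizer ({b} : Set G)).relIndex A ≠ 0 ∧
    (Subgroup.centralizer ({b} : Set G)).relIndex A ≤ n := by
  classical
  set C := (Subgroup.centralizer ({b} : Set G)).subgroupOf A with hCdef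
  have hrel : (Subgroup.centralizer ({b} : Set G)).relIndex A = Nat.card (↥A ⧸ C) :=
    Subgroup.index_eq_card C
  by_contra hcon
  push_neg at hcon
  -- in either case (infinite quotient, or finite with more than n classes)
  -- we find n+1 pairwise distinct cosets
  have hemb : ∃ f : Fin (n+1) → ↥A ⧸ C, Function.Injective f := by
    rcases finite_or_infinite (↥A ⧸ C) with hfin | hinf
    · have hne : Nat.card (↥A ⧸ C) ≠ 0 := Nat.card_ne_zero.mpr ⟨inferInstance, hfin⟩
      have hge : n + 1 ≤ Nat.card (↥A ⧸ C) := by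
        have := hcon (by rw [hrel]; exact hne)
        omega
      haveI : Fintype (↥A ⧸ C) := Fintype.ofFinite _
      have hge' : n + 1 ≤ Fintype.card (↥A ⧸ C) := by
        rwa [Nat.card_eq_fintype_card] at hge
      exact ⟨(Fintype.equivFin (↥A ⧸ C)).symm ∘ Fin.castLE hge',
        ((Fintype.equivFin (↥A ⧸ C)).symm.injective).comp (Fin.strictMono_castLE hge').injective⟩
    · exact ⟨fun i => (Infinite.natEmbedding (↥A ⧸ C)) (i : ℕ),
        fun i j hij => Fin.val_injective ((Infinite.natEmbedding _).injective hij)⟩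
  obtain ⟨f, hf⟩ := hemb
  apply h
  refine ⟨fun i => ((f i).out : G), fun i => (f i).out.2, ?_⟩
  intro i j hij hmem
  have hij' : f i = f j := by
    rw [← QuotientGroup.out_eq' (f i), ← QuotientGroup.out_eq' (f j)]
    apply (QuotientGroup.eq).mpr
    rw [Subgroup.mem_subgroupOf]
    simpa using hmem
  exact (Fin.ne_of_lt hij) (hf hij')


end DietzmannMain

end AuxiliaryNeumann

theorem abelian_envelope {G : Type*} [Group G] (H : Subgroup G)
    (hab : ∀ x ∈ H, ∀ y ∈ H, x * y = y * x)
    (hTP : NoCosetTP2Pattern G) (hsat : CentralizerSaturated G H) :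
    ∃ (F : Finset G) (n : ℕ) (A : Subgroup G),
      (∀ g ∈ F, H ≤ Subgroup.centralizer {g}) ∧
      A = (⨅ g ∈ F, Subgroup.centralizer {g}) ∧
      H ≤ A ∧
      (∀ a ∈ A, (Subgroup.centralizer {a}).relIndex A ≠ 0 ∧
                (Subgroup.centralizer {a}).relIndex A ≤ n) ∧
      ((⁅A, A⁆ : Subgroup G) : Set G).Finite := by
  classical
  obtain ⟨n₀, hno⟩ := hTP
  have h0 : HasCosetTP2Pattern G 0 := by
    refine ⟨fun _ => Fin.elim0, fun _ => 1, fun l i => i.elim0, ?_⟩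
    intro m f
    exact ⟨1, fun l _ => (f l).elim0⟩
  have h1 : HasCosetTP2Pattern G 1 := by
    refine ⟨fun _ _ => 1, fun _ => 1, ?_, ?_⟩
    · intro l i j hij
      exact absurd (Subsingleton.elim i j) hij
    · intro m f
      refine ⟨1, fun l _ => ?_⟩
      rw [mem_leftCoset_iff]
      simpa using Subgroup.one_mem _
  have hn₀2 : 2 ≤ n₀ := by
    rcases n₀ with _ | _ | n
    · exact absurd h0 hno
    · exact absurd h1 hno
    · omega
  set nn := n₀ - 1 with hnn
  have hn₀eq : n₀ = nn + 1 := by omega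
  rw [hn₀eq] at hno
  set M := max (Cardinal.mk H) Cardinal.aleph0 with hM
  have hMinf : Cardinal.aleph0 ≤ M := le_max_right _ _
  set GoodS : Set G → Prop := fun S =>
    ((H : Set G) ⊆ S) ∧ (∀ g ∈ S, H ≤ Subgroup.centralizer {g}) ∧ Cardinal.mk S ≤ M
    with hGoodSdef
  have hHgood : ∀ h ∈ H, H ≤ Subgroup.centralizer {h} := by
    intro h hh h' hh'
    rw [Subgroup.mem_centralizer_singleton_iff]
    exact hab h' hh' h hh
  have hsub_le : ∀ g : G, H ≤ Subgroup.centralizer {g} →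
      subgroupCenter H ≤ Subgroup.centralizer {g} :=
    fun g hg => (inf_le_left : subgroupCenter H ≤ H).trans hg
  have hbase : GoodS (H : Set G) := by
    refine ⟨subset_rfl, fun g hg => hHgood g hg, ?_⟩
    calc Cardinal.mk ↑(H : Set G) = Cardinal.mk H :=
          Cardinal.mk_congr (Equiv.subtypeEquivRight (fun x => Iff.rfl))
      _ ≤ M := le_max_left _ _
  have hstepGood : ∀ S : Set G, GoodS S → ∀ (a : Fin (nn+1) → G) (b : G),
      WitnessTriple H nn S a b → GoodS (S ∪ (Set.range a ∪ {b})) := by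
    intro S hS a b hw
    obtain ⟨hw1, hw2, _⟩ := hw
    refine ⟨hS.1.trans Set.subset_union_left, ?_, ?_⟩
    · intro g hg
      rcases hg with hg | hg
      · exact hS.2.1 g hg
      · rcases hg with ⟨i, rfl⟩ | hgb
        · intro h hh
          rw [Subgroup.mem_centralizer_singleton_iff]
          have hmem : a i ∈ Subgroup.centralizer {h} :=
            hw1 i h (hS.1 hh) (hsub_le h (hHgood h hh))
          exact (Subgroup.mem_centralizer_singleton_iff.mp hmem).symm
        · have hgb' : g = b := hgb
          subst hgb'
          intro h hh
          rw [Subgroup.mem_centralizer_singleton_iff]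
          have hmem : g ∈ Subgroup.centralizer {h} := hw2 h (hS.1 hh) (hHgood h hh)
          exact (Subgroup.mem_centralizer_singleton_iff.mp hmem).symm
    · calc Cardinal.mk ↑(S ∪ (Set.range a ∪ {b}))
          ≤ Cardinal.mk ↑S + Cardinal.mk ↑(Set.range a ∪ {b}) := Cardinal.mk_union_le _ _
      _ ≤ M := Cardinal.add_le_of_le hMinf hS.2.2
          (le_trans (le_of_lt (((Set.finite_range a).union (Set.finite_singleton b)).lt_aleph0))
            hMinf)
  by_cases hall : ∀ S : Set G, GoodS S →
      ∃ (a : Fin (nn+1) → G) (b : G), WitnessTriple H nn S a b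
  · exfalso
    have hall' : ∀ p : {S : Set G // GoodS S},
        ∃ (a : Fin (nn+1) → G) (b : G), WitnessTriple H nn p.1 a b :=
      fun p => hall p.1 p.2
    choose fa fb hw using hall'
    let seq : ℕ → {S : Set G // GoodS S} := fun l => Nat.rec
      ⟨(H : Set G), hbase⟩
      (fun _ p => ⟨p.1 ∪ (Set.range (fa p) ∪ {fb p}),
        hstepGood p.1 p.2 _ _ (hw p)⟩) l
    set a2 : ℕ → Fin (nn+1) → G := fun l => fa (seq l) with ha2
    set b2 : ℕ → G := fun l => fb (seq l) with hb2
    have hwit : ∀ l, WitnessTriple H nn (seq l).1 (a2 l) (b2 l) := fun l => hw _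
    have hseq_succ : ∀ l, (seq (l+1)).1 = (seq l).1 ∪ (Set.range (a2 l) ∪ {b2 l}) :=
      fun l => rfl
    have hmono : ∀ l l', l ≤ l' → (seq l).1 ⊆ (seq l').1 := by
      intro l l' hll
      induction hll with
      | refl => exact subset_rfl
      | step h ih =>
        refine ih.trans ?_
        rw [hseq_succ]
        exact Set.subset_union_left
    have hmemA : ∀ l (i : Fin (nn+1)), a2 l i ∈ (seq (l+1)).1 := by
      intro l i
      rw [hseq_succ]
      exact Or.inr (Or.inl ⟨i, rfl⟩)
    have hmemB : ∀ l, b2 l ∈ (seq (l+1)).1 := by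
      intro l
      rw [hseq_succ]
      exact Or.inr (Or.inr rfl)
    have hHle : ∀ l (g : G), g ∈ (seq l).1 → H ≤ Subgroup.centralizer {g} :=
      fun l g hg => (seq l).2.2.1 g hg
    have hAC : ∀ k l, k < l → ∀ i j, a2 l i ∈ Subgroup.centralizer {a2 k j} :=
      fun k l hkl i j => (hwit l).1 i (a2 k j) (hmono (k+1) l hkl (hmemA k j))
        (hsub_le _ (hHle (k+1) _ (hmemA k j)))
    have hBC : ∀ k l, k < l → ∀ j, b2 l ∈ Subgroup.centralizer {a2 k j} :=
      fun k l hkl j => (hwit l).2.1 (a2 k j) (hmono (k+1) l hkl (hmemA k j))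
        (hHle (k+1) _ (hmemA k j))
    have hAB : ∀ k l, k < l → ∀ i, a2 l i ∈ Subgroup.centralizer {b2 k} :=
      fun k l hkl i => (hwit l).1 i (b2 k) (hmono (k+1) l hkl (hmemB k))
        (hsub_le _ (hHle (k+1) _ (hmemB k)))
    apply hno
    refine ⟨a2, b2, ?_, ?_⟩
    · intro l i j hij
      rw [Set.disjoint_left]
      intro x hxi hxj
      rw [mem_leftCoset_iff, SetLike.mem_coe] at hxi hxj
      have hmem : (a2 l i)⁻¹ * a2 l j ∈ Subgroup.centralizer {b2 l} := by
        have h2 : (a2 l i)⁻¹ * a2 l j = ((a2 l i)⁻¹ * x) * ((a2 l j)⁻¹ * x)⁻¹ := by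
          group
        rw [h2]
        exact Subgroup.mul_mem _ hxi (Subgroup.inv_mem _ hxj)
      rcases lt_or_gt_of_ne hij with h | h
      · exact (hwit l).2.2 i j h hmem
      · refine (hwit l).2.2 j i h ?_
        have := Subgroup.inv_mem _ hmem
        simpa [mul_inv_rev] using this
    · intro m f
      set FF : ℕ → G := fun l => a2 l (f l) with hFF
      refine ⟨((List.range (m+1)).map FF).prod, ?_⟩
      intro l hl
      rw [mem_leftCoset_iff, SetLike.mem_coe]
      have hadd : l + (m+1-l) = m+1 := by omega
      have hsplit : List.range (m+1) =
          List.range l ++ List.map (l + ·) (List.range (m+1-l)) := by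
        have h4 := List.range_add (n := l) (m := m+1-l)
        rw [hadd] at h4
        exact h4
      have hsplit2 : List.range (m+1-l) = 0 :: List.map Nat.succ (List.range (m-l)) := by
        have h3 : m+1-l = (m-l)+1 := by omega
        rw [h3, List.range_succ_eq_map]
      set P : G := ((List.range l).map FF).prod with hP
      set Q : G := ((List.range (m-l)).map (fun t => FF (l + (t+1)))).prod with hQ
      have hx : ((List.range (m+1)).map FF).prod = P * (FF l * Q) := by
        rw [hsplit, List.map_append, List.prod_append, hsplit2, List.map_map,
          List.map_cons, List.prod_cons, List.map_map]
        rfl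
      have hPC : P ∈ Subgroup.centralizer {b2 l} := by
        rw [hP]
        apply list_prod_mem
        intro g hg
        rw [List.mem_map] at hg
        obtain ⟨k, hk, rfl⟩ := hg
        rw [List.mem_range] at hk
        have hbc := hBC k l hk (f k)
        rw [Subgroup.mem_centralizer_singleton_iff] at hbc ⊢
        exact hbc.symm
      have hQC : Q ∈ Subgroup.centralizer {b2 l} := by
        rw [hQ]
        apply list_prod_mem
        intro g hg
        rw [List.mem_map] at hg
        obtain ⟨t, _, rfl⟩ := hg
        exact hAB l (l + (t+1)) (by omega) (f (l + (t+1)))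
      have hPA : Commute P (FF l) := by
        rw [hP]
        apply Commute.list_prod_left
        intro g hg
        rw [List.mem_map] at hg
        obtain ⟨k, hk, rfl⟩ := hg
        rw [List.mem_range] at hk
        have hac := hAC k l hk (f l) (f k)
        rw [Subgroup.mem_centralizer_singleton_iff] at hac
        exact Commute.symm hac
      have h5 : (FF l)⁻¹ * (P * (FF l * Q)) = P * Q := by
        rw [← mul_assoc P (FF l) Q, hPA.eq, mul_assoc, inv_mul_cancel_left]
      rw [hx, h5]
      exact Subgroup.mul_mem _ hPC hQC
  · push_neg at hall
    obtain ⟨S, hGood, hnowit⟩ := hall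
    have hfin2 : ¬ ∀ F : Finset G, ↑F ⊆ S →
        ∃ (a : Fin (nn+1) → G) (b : G), WitnessTriple H nn ↑F a b := by
      intro hforall
      obtain ⟨aa, bb, hww⟩ := hsat nn S hGood.2.2 hforall
      exact hnowit aa bb hww
    push_neg at hfin2
    obtain ⟨F, hFS, hnowitF⟩ := hfin2
    set A : Subgroup G := ⨅ g ∈ F, Subgroup.centralizer {g} with hA
    have hFcent : ∀ g ∈ F, H ≤ Subgroup.centralizer {g} := fun g hg => hGood.2.1 g (hFS hg)
    have hHA : H ≤ A := le_iInf₂ hFcent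
    have hmemAiff : ∀ x : G, x ∈ A ↔ ∀ g ∈ F, x ∈ Subgroup.centralizer {g} := by
      intro x
      simp [hA, Subgroup.mem_iInf]
    have hbound : ∀ a ∈ A, (Subgroup.centralizer {a}).relIndex A ≠ 0 ∧
        (Subgroup.centralizer {a}).relIndex A ≤ nn := by
      intro b hb
      apply relindex_bound_of_no_tuple nn
      rintro ⟨t, htA, hts⟩
      exact hnowitF t b ⟨fun i g hg _ => (hmemAiff (t i)).mp (htA i) g hg,
        fun g hg _ => (hmemAiff b).mp hb g hg, hts⟩
    refine ⟨F, nn, A, hFcent, hA, hHA, hbound, ?_⟩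
    have hidxA : ∀ u : ↥A, (Subgroup.centralizer ({u} : Set ↥A)).index ≠ 0 ∧
        (Subgroup.centralizer ({u} : Set ↥A)).index ≤ nn := by
      intro u
      have hCeq : Subgroup.centralizer ({u} : Set ↥A) =
          (Subgroup.centralizer ({(u : G)} : Set G)).subgroupOf A := by
        ext v
        rw [Subgroup.mem_centralizer_singleton_iff, Subgroup.mem_subgroupOf,
          Subgroup.mem_centralizer_singleton_iff]
        constructor
        · intro hh
          exact_mod_cast congrArg Subtype.val hh
        · intro hh
          exact Subtype.ext (by push_cast; exact hh)
      rw [hCeq]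
      exact hbound (u : G) u.2
    have hfinA := bfc_commutator_finite nn hidxA
    have hmap : Subgroup.map A.subtype ⁅(⊤ : Subgroup ↥A), ⊤⁆ = ⁅A, A⁆ := by
      rw [Subgroup.map_commutator]
      congr 1 <;> rw [← MonoidHom.range_eq_map, Subgroup.range_subtype]
    have hset : ((⁅A, A⁆ : Subgroup G) : Set G) =
        A.subtype '' ((⁅(⊤ : Subgroup ↥A), ⊤⁆ : Subgroup ↥A) : Set ↥A) := by
      rw [← hmap, Subgroup.coe_map]
    rw [hset]
    exact hfinA.image _
end

section
/- Let G be a group and H a subgroup of G. Suppose that G has no TP₂-pattern for cosets of centralizers and that G is H-centralizer-saturated. Then there exist a natural number m and finite subsets F₁ ⊆ {g ∈ G : Z(H) ⊆ C_G(g)} and F₂ ⊆ {g ∈ G : H ⊆ C_G(g)} such that, setting K := ⋂_{g∈F₂} C_G(g) and A := K ∩ ⋂_{g∈F₁} C_G(g): (a) H ⊆ K; (b) Z(H) ⊆ A ⊆ K; and (c) for every k ∈ K the set {a⁻¹ k a : a ∈ A} has at most m elements. Moreover, if H is normal in G, then the subgroups A' := ⋂_{x∈G} x⁻¹Ax and K'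 := ⋂_{x∈G} x⁻¹Kx are normal in G and still satisfy: H ⊆ K', Z(H) ⊆ A' ⊆ K', and for every k ∈ K' the set {a⁻¹ k a : a ∈ A'} has at most m elements. -/
open scoped Pointwise

/- ### Auxiliary material -/

namespace NilpotentKeyAux

/-- Iterated history used to build the rows of a TP₂ pattern. -/
def histList {α : Type*} (next : List α → α) : ℕ → List α
  | 0 => []
  | l + 1 => histList next l ++ [next (histList next l)]

lemma mem_histList {α : Type*} (next : List α → α) {k l : ℕ} (h : k < l) :
    next (histList next k) ∈ histList next l := by
  induction l with
  | zero => omega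
  | succ l ih =>
    rcases Nat.lt_succ_iff_lt_or_eq.mp h with h' | h'
    · exact List.mem_append_left _ (ih h')
    · subst h'
      exact List.mem_append_right _ (by simp)

/-- If every `(n+1)`-tuple from `s` has a repetition, then `s` is finite of size at most `n`. -/
lemma finite_and_ncard_le {α : Type*} (s : Set α) (n : ℕ)
    (h : ∀ c : Fin (n + 1) → α, (∀ i, c i ∈ s) → ∃ i j : Fin (n + 1), i < j ∧ c i = c j) :
    s.Finite ∧ s.ncard ≤ n := by
  have hfin : ∀ t : Finset α, ↑t ⊆ s → t.card ≤ n := by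
    intro t ht
    by_contra hc
    push_neg at hc
    have hcast : n + 1 ≤ t.card := hc
    set c : Fin (n + 1) → α := fun i => (t.equivFin.symm (Fin.castLE hcast i) : α) with hcdef
    obtain ⟨i, j, hij, heq⟩ := h c (fun i => ht (t.equivFin.symm (Fin.castLE hcast i)).2)
    have h1 : t.equivFin.symm (Fin.castLE hcast i) = t.equivFin.symm (Fin.castLE hcast j) :=
      Subtype.ext heq
    have h2 := t.equivFin.symm.injective h1
    have hv : (i : ℕ) = (j : ℕ) := by
      simpa using congrArg Fin.val h2
    have : (i : ℕ) < (j : ℕ) := hij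
    omega
  have hsf : s.Finite := by
    by_contra hinf
    obtain ⟨t, hts, hcard⟩ := Set.Infinite.exists_subset_card_eq hinf (n + 1)
    have := hfin t hts
    omega
  refine ⟨hsf, ?_⟩
  rw [Set.ncard_eq_toFinset_card _ hsf]
  exact hfin _ (by simp)

/-- The core combinatorial step: if witnesses exist over every finite set, then `G`
admits a TP₂ pattern of width `n + 1`. -/
lemma tp2_of_witnesses {G : Type*} [Group G] (H : Subgroup G) (n : ℕ)
    (hsat : CentralizerSaturated G H)
    (hwit : ∀ F : Finset G, ∃ (a : Fin (n + 1) → G) (b : G), WitnessTriple H n ↑F a b) :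
    HasCosetTP2Pattern G (n + 1) := by
  classical
  set Sset : List ((Fin (n + 1) → G) × G) → Set G :=
    fun L => (H : Set G) ∪ {g | ∃ p ∈ L, g = p.2 ∨ ∃ i, g = p.1 i} with hSset
  have hfinpart : ∀ L : List ((Fin (n + 1) → G) × G), ({g | ∃ p ∈ L, g = p.2 ∨ ∃ i, g = p.1 i} : Set G).Finite := by
    intro L
    have heq : {g | ∃ p ∈ L, g = p.2 ∨ ∃ i, g = p.1 i} =
        ⋃ p ∈ {q | q ∈ L}, ({p.2} ∪ Set.range p.1) := by
      ext g
      simp [Set.mem_iUnion, eq_comm]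
    rw [heq]
    exact Set.Finite.biUnion (List.finite_toSet L)
      (fun p _ => (Set.finite_singleton _).union (Set.finite_range _))
  have hcard : ∀ L, Cardinal.mk (Sset L) ≤ max (Cardinal.mk H) Cardinal.aleph0 := by
    intro L
    refine le_trans (Cardinal.mk_union_le _ _) ?_
    refine Cardinal.add_le_of_le (le_max_right _ _) ?_ ?_
    · rw [SetLike.coe_sort_coe]
      exact le_max_left _ _
    · exact le_max_of_le_right (le_of_lt (Set.Finite.lt_aleph0 (hfinpart L)))
  have key : ∀ L, ∃ ab : (Fin (n + 1) → G) × G, WitnessTriple H n (Sset L) ab.1 ab.2 := by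
    intro L
    obtain ⟨a, b, hab⟩ := hsat n (Sset L) (hcard L) (fun F _ => hwit F)
    exact ⟨(a, b), hab⟩
  choose next hnext using key
  set a : ℕ → Fin (n + 1) → G := fun l => (next (histList next l)).1 with ha
  set b : ℕ → G := fun l => (next (histList next l)).2 with hb
  have hW : ∀ l, WitnessTriple H n (Sset (histList next l)) (a l) (b l) := fun l => hnext _
  have hmem_H : ∀ (l : ℕ) {h : G}, h ∈ H → h ∈ Sset (histList next l) := by
    intro l h hh
    exact Set.mem_union_left _ hh
  have hmem_b : ∀ {k l : ℕ}, k < l → b k ∈ Sset (histList next l) := by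
    intro k l hkl
    exact Set.mem_union_right _ ⟨next (histList next k), mem_histList next hkl, Or.inl rfl⟩
  have hmem_a : ∀ {k l : ℕ} (i), k < l → a k i ∈ Sset (histList next l) := by
    intro k l i hkl
    exact Set.mem_union_right _ ⟨next (histList next k), mem_histList next hkl, Or.inr ⟨i, rfl⟩⟩
  have hZC : ∀ {h : G}, h ∈ H → subgroupCenter H ≤ Subgroup.centralizer {h} :=
    fun hh => le_trans inf_le_right (Subgroup.centralizer_le (Set.singleton_subset_iff.mpr hh))
  have haH : ∀ l i, ∀ h ∈ H, a l i * h = h * a l i := by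
    intro l i h hh
    exact Subgroup.mem_centralizer_singleton_iff.mp ((hW l).1 i h (hmem_H l hh) (hZC hh))
  have hHleA : ∀ l i, H ≤ Subgroup.centralizer {a l i} := by
    intro l i h hh
    exact Subgroup.mem_centralizer_singleton_iff.mpr (haH l i h hh).symm
  have hZleA : ∀ l i, subgroupCenter H ≤ Subgroup.centralizer {a l i} :=
    fun l i => le_trans inf_le_left (hHleA l i)
  have hHCz : ∀ {z : G}, z ∈ subgroupCenter H → H ≤ Subgroup.centralizer {z} := by
    intro z hz h hh
    exact Subgroup.mem_centralizer_singleton_iff.mpr (hz.2 h hh)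
  have hbZ : ∀ l, subgroupCenter H ≤ Subgroup.centralizer {b l} := by
    intro l z hz
    have h1 := (hW l).2.1 z (hmem_H l hz.1) (hHCz hz)
    exact Subgroup.mem_centralizer_singleton_iff.mpr
      (Subgroup.mem_centralizer_singleton_iff.mp h1).symm
  have cross_ab : ∀ {k l : ℕ}, k < l → ∀ i, a l i ∈ Subgroup.centralizer {b k} :=
    fun hkl i => (hW _).1 i _ (hmem_b hkl) (hbZ _)
  have cross_aa : ∀ {k l : ℕ}, k < l → ∀ i j, a l i ∈ Subgroup.centralizer {a k j} :=
    fun hkl i j => (hW _).1 i _ (hmem_a j hkl) (hZleA _ _)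
  have cross_ba : ∀ {k l : ℕ}, k < l → ∀ i, b l ∈ Subgroup.centralizer {a k i} :=
    fun hkl i => (hW _).2.1 _ (hmem_a i hkl) (hHleA _ _)
  have comm_ab : ∀ {k l : ℕ}, k ≠ l → ∀ i, a k i ∈ Subgroup.centralizer {b l} := by
    intro k l hne i
    rcases Nat.lt_or_ge k l with h | h
    · exact Subgroup.mem_centralizer_singleton_iff.mpr
        (Subgroup.mem_centralizer_singleton_iff.mp (cross_ba h i)).symm
    · exact cross_ab (lt_of_le_of_ne h (Ne.symm hne)) i
  have comm_aa : ∀ {k l : ℕ}, k ≠ l → ∀ i j, Commute (a k i) (a l j) := by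
    intro k l hne i j
    rcases Nat.lt_or_ge k l with h | h
    · exact (Subgroup.mem_centralizer_singleton_iff.mp (cross_aa h j i)).symm
    · exact Subgroup.mem_centralizer_singleton_iff.mp
        (cross_aa (lt_of_le_of_ne h (Ne.symm hne)) i j)
  refine ⟨a, b, ?_, ?_⟩
  · intro l i j hij
    rw [Set.disjoint_left]
    intro x hxi hxj
    have h1 : (a l i)⁻¹ * x ∈ Subgroup.centralizer {b l} := (mem_leftCoset_iff _).mp hxi
    have h2 : (a l j)⁻¹ * x ∈ Subgroup.centralizer {b l} := (mem_leftCoset_iff _).mp hxj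
    rcases hij.lt_or_gt with h | h
    · refine (hW l).2.2 i j h ?_
      have hkey : (a l i)⁻¹ * a l j = ((a l i)⁻¹ * x) * ((a l j)⁻¹ * x)⁻¹ := by group
      rw [hkey]
      exact mul_mem h1 (inv_mem h2)
    · refine (hW l).2.2 j i h ?_
      have hkey : (a l j)⁻¹ * a l i = ((a l j)⁻¹ * x) * ((a l i)⁻¹ * x)⁻¹ := by group
      rw [hkey]
      exact mul_mem h2 (inv_mem h1)
  · intro m f
    have col : ∀ m : ℕ, ∃ x : G,
        (∀ l ≤ m, (a l (f l))⁻¹ * x ∈ Subgroup.centralizer {b l}) ∧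
        (∀ l, m < l → x ∈ Subgroup.centralizer {b l}) ∧
        (∀ l, m < l → ∀ j, Commute x (a l j)) := by
      intro m
      induction m with
      | zero =>
        refine ⟨a 0 (f 0), ?_, ?_, ?_⟩
        · intro l hl
          have hl0 : l = 0 := Nat.le_zero.mp hl
          subst hl0
          rw [inv_mul_cancel]
          exact one_mem _
        · intro l hl
          exact comm_ab (by omega) (f 0)
        · intro l hl j
          exact comm_aa (by omega) (f 0) j
      | succ m ih =>
        obtain ⟨x, h1, h2, h3⟩ := ih
        refine ⟨x * a (m + 1) (f (m + 1)), ?_, ?_, ?_⟩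
        · intro l hl
          rcases Nat.eq_or_lt_of_le hl with heq | hlt
          · subst heq
            rw [(h3 (m + 1) (by omega) (f (m + 1))).eq, inv_mul_cancel_left]
            exact h2 (m + 1) (by omega)
          · have hlm : l ≤ m := by omega
            rw [← mul_assoc]
            exact mul_mem (h1 l hlm) (comm_ab (by omega) (f (m + 1)))
        · intro l hl
          exact mul_mem (h2 l (by omega)) (comm_ab (by omega) (f (m + 1)))
        · intro l hl j
          exact Commute.mul_left (h3 l (by omega) j) (comm_aa (by omega) (f (m + 1)) j)
    obtain ⟨x, h1, -, -⟩ := col m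
    exact ⟨x, fun l hl => (mem_leftCoset_iff _).mpr (h1 l hl)⟩

end NilpotentKeyAux

theorem nilpotent_key_lemma {G : Type*} [Group G] (H : Subgroup G)
    (hTP : NoCosetTP2Pattern G) (hsat : CentralizerSaturated G H) :
    ∃ (m : ℕ) (F₁ F₂ : Finset G),
      (∀ g ∈ F₁, subgroupCenter H ≤ Subgroup.centralizer {g}) ∧
      (∀ g ∈ F₂, H ≤ Subgroup.centralizer {g}) ∧
      ∃ (K A : Subgroup G),
        K = (⨅ g ∈ F₂, Subgroup.centralizer {g}) ∧
        A = K ⊓ (⨅ g ∈ F₁, Subgroup.centralizer {g}) ∧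
        H ≤ K ∧ subgroupCenter H ≤ A ∧ A ≤ K ∧
        (∀ k ∈ K, ({x | ∃ a ∈ A, x = a⁻¹ * k * a}).Finite ∧
                  ({x | ∃ a ∈ A, x = a⁻¹ * k * a}).ncard ≤ m) ∧
        (H.Normal →
          ∃ (K' A' : Subgroup G),
            K' = (⨅ x : G, K.map (MulAut.conj x⁻¹).toMonoidHom) ∧
            A' = (⨅ x : G, A.map (MulAut.conj x⁻¹).toMonoidHom) ∧
            K'.Normal ∧ A'.Normal ∧
            H ≤ K' ∧ subgroupCenter H ≤ A' ∧ A' ≤ K' ∧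
            (∀ k ∈ K', ({x | ∃ a ∈ A', x = a⁻¹ * k * a}).Finite ∧
                       ({x | ∃ a ∈ A', x = a⁻¹ * k * a}).ncard ≤ m)) := by
  classical
  obtain ⟨n, hn⟩ := hTP
  rcases n with _ | n'
  · exact absurd ⟨fun _ => Fin.elim0, fun _ => 1, fun l i => i.elim0,
      fun m f => (f 0).elim0⟩ hn
  have hex : ∃ F : Finset G,
      ¬ ∃ (a : Fin (n' + 1) → G) (b : G), WitnessTriple H n' ↑F a b := by
    by_contra hcon
    push_neg at hcon
    exact hn (NilpotentKeyAux.tp2_of_witnesses H n' hsat hcon)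
  obtain ⟨F, hF⟩ := hex
  set F₁ : Finset G := F.filter (fun g => subgroupCenter H ≤ Subgroup.centralizer {g}) with hF₁
  set F₂ : Finset G := F.filter (fun g => H ≤ Subgroup.centralizer {g}) with hF₂
  set K : Subgroup G := ⨅ g ∈ F₂, Subgroup.centralizer {g} with hK
  set A : Subgroup G := K ⊓ ⨅ g ∈ F₁, Subgroup.centralizer {g} with hA
  have hF₁mem : ∀ g ∈ F₁, subgroupCenter H ≤ Subgroup.centralizer {g} := by
    intro g hg
    exact (Finset.mem_filter.mp hg).2
  have hF₂mem : ∀ g ∈ F₂, H ≤ Subgroup.centralizer {g} := by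
    intro g hg
    exact (Finset.mem_filter.mp hg).2
  have hHK : H ≤ K := by
    rw [hK]
    exact le_iInf fun g => le_iInf fun hg => hF₂mem g hg
  have hAK : A ≤ K := by
    rw [hA]; exact inf_le_left
  have hZA : subgroupCenter H ≤ A := by
    rw [hA]
    refine le_inf ?_ ?_
    · exact le_trans inf_le_left hHK
    · exact le_iInf fun g => le_iInf fun hg => hF₁mem g hg
  have hKle : ∀ g ∈ F₂, K ≤ Subgroup.centralizer {g} := by
    intro g hg
    rw [hK]
    exact le_trans (iInf_le _ g) (iInf_le _ hg)
  have hAle : ∀ g ∈ F₁, A ≤ Subgroup.centralizer {g} := by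
    intro g hg
    rw [hA]
    exact le_trans inf_le_right (le_trans (iInf_le _ g) (iInf_le _ hg))
  -- the key finiteness bound
  have hbound : ∀ k ∈ K, ∀ c : Fin (n' + 1) → G,
      (∀ i, c i ∈ {x | ∃ a ∈ A, x = a⁻¹ * k * a}) → ∃ i j, i < j ∧ c i = c j := by
    intro k hk c hc
    choose d hd hcd using hc
    by_contra hno
    push_neg at hno
    apply hF
    refine ⟨fun i => (d i)⁻¹, k, ?_, ?_, ?_⟩
    · intro i g hg hZg
      exact hAle g (Finset.mem_filter.mpr ⟨hg, hZg⟩) (inv_mem (hd i))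
    · intro g hg hHg
      exact hKle g (Finset.mem_filter.mpr ⟨hg, hHg⟩) hk
    · intro i j hij hmem
      apply hno i j hij
      simp only [inv_inv] at hmem
      have hcm : (d i * (d j)⁻¹) * k = k * (d i * (d j)⁻¹) :=
        Subgroup.mem_centralizer_singleton_iff.mp hmem
      rw [hcd i, hcd j]
      have h1 : (d i)⁻¹ * (d i * (d j)⁻¹ * k) * d j =
          (d i)⁻¹ * (k * (d i * (d j)⁻¹)) * d j := by rw [hcm]
      calc (d i)⁻¹ * k * d i = (d i)⁻¹ * (k * (d i * (d j)⁻¹)) * d j := by group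
        _ = (d i)⁻¹ * (d i * (d j)⁻¹ * k) * d j := h1.symm
        _ = (d j)⁻¹ * k * d j := by group
  have hConj : ∀ k ∈ K, ({x | ∃ a ∈ A, x = a⁻¹ * k * a}).Finite ∧
      ({x | ∃ a ∈ A, x = a⁻¹ * k * a}).ncard ≤ n' :=
    fun k hk => NilpotentKeyAux.finite_and_ncard_le _ n' (hbound k hk)
  refine ⟨n', F₁, F₂, hF₁mem, hF₂mem, K, A, rfl, rfl, hHK, hZA, hAK, hConj, ?_⟩
  -- the normal case
  intro hN
  set K' : Subgroup G := ⨅ x : G, K.map (MulAut.conj x⁻¹).toMonoidHom with hK'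
  set A' : Subgroup G := ⨅ x : G, A.map (MulAut.conj x⁻¹).toMonoidHom with hA'
  have hmemK' : ∀ g : G, g ∈ K' ↔ ∀ x : G, x * g * x⁻¹ ∈ K := by
    intro g
    rw [hK', Subgroup.mem_iInf]
    refine forall_congr' fun x => ?_
    rw [Subgroup.mem_map_equiv, MulAut.conj_symm_apply, inv_inv]
  have hmemA' : ∀ g : G, g ∈ A' ↔ ∀ x : G, x * g * x⁻¹ ∈ A := by
    intro g
    rw [hA', Subgroup.mem_iInf]
    refine forall_congr' fun x => ?_
    rw [Subgroup.mem_map_equiv, MulAut.conj_symm_apply, inv_inv]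
  have hK'N : K'.Normal := by
    constructor
    intro k hk g
    rw [hmemK'] at hk ⊢
    intro x
    have := hk (x * g)
    simpa [mul_assoc] using this
  have hA'N : A'.Normal := by
    constructor
    intro k hk g
    rw [hmemA'] at hk ⊢
    intro x
    have := hk (x * g)
    simpa [mul_assoc] using this
  have hHK' : H ≤ K' := by
    intro h hh
    rw [hmemK']
    intro x
    exact hHK (hN.conj_mem h hh x)
  have hZA' : subgroupCenter H ≤ A' := by
    intro z hz
    rw [hmemA']
    intro x
    have h1 : x * z * x⁻¹ ∈ H := hN.conj_mem z hz.1 x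
    have h2 : x * z * x⁻¹ ∈ Subgroup.centralizer (H : Set G) := by
      rw [Subgroup.mem_centralizer_iff]
      intro h hh
      have hh' : x⁻¹ * h * x ∈ H := by
        simpa using hN.conj_mem h hh x⁻¹
      have hcz : (x⁻¹ * h * x) * z = z * (x⁻¹ * h * x) := hz.2 _ hh'
      have := congrArg (fun w => x * w * x⁻¹) hcz
      simpa [mul_assoc] using this
    exact hZA (Subgroup.mem_inf.mpr ⟨h1, h2⟩)
  have hA'K' : A' ≤ K' := by
    intro g hg
    rw [hmemA'] at hg
    rw [hmemK']
    intro x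
    exact hAK (hg x)
  have hK'K : K' ≤ K := by
    intro g hg
    have := (hmemK' g).mp hg 1
    simpa using this
  have hA'A : A' ≤ A := by
    intro g hg
    have := (hmemA' g).mp hg 1
    simpa using this
  refine ⟨K', A', rfl, rfl, hK'N, hA'N, hHK', hZA', hA'K', ?_⟩
  intro k hk
  obtain ⟨hfin, hcard⟩ := hConj k (hK'K hk)
  have hsub : {x | ∃ a ∈ A', x = a⁻¹ * k * a} ⊆ {x | ∃ a ∈ A, x = a⁻¹ * k * a} := by
    rintro x ⟨a, ha, hx⟩
    exact ⟨a, hA'A ha, hx⟩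
  exact ⟨hfin.subset hsub, le_trans (Set.ncard_le_ncard hsub hfin) hcard⟩
end

section
/- Let G be a group with the following property: for every normal subgroup N of G and every abelian normal subgroup B of the quotient G/N, there exists an almost abelian normal subgroup of G/N containing B. Then for every normal solvable subgroup H of G of derived length n, there exists a chain of normal subgroups {1} = S₀ ≤ S₁ ≤ ⋯ ≤ Sₙ of G such that H ⊆ Sₙ and for each 0 ≤ i < n the quotient group S_{i+1}/S_i is almost abelian. -/
/-- A group `K` is almost abelian (an FC-group) if the centralizer of every element
has finite index. -/
def AlmostAbelian (K : Type*) [Group K] : Prop :=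
  ∀ k : K, (Subgroup.centralizer ({k} : Set K)).index ≠ 0

/-- `T / N` is almost abelian, where `N` is a normal subgroup of `G`:
the image of `T` in `G ⧸ N` is almost abelian. -/
def QuotAlmostAbelian {G : Type*} [Group G] (N T : Subgroup G) (hN : N.Normal) : Prop :=
  letI : N.Normal := hN
  AlmostAbelian ↥(T.map (QuotientGroup.mk' N))

open scoped commutatorElement

section Aux

variable {G : Type*} [Group G]
  (hyp : ∀ (N : Subgroup G) [N.Normal] (B : Subgroup (G ⧸ N)),
      B.Normal → (∀ x ∈ B, ∀ y ∈ B, x * y = y * x) →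
      ∃ C : Subgroup (G ⧸ N), C.Normal ∧ B ≤ C ∧ AlmostAbelian ↥C)
  (D : ℕ → Subgroup G)
  (hDnorm : ∀ k, (D k).Normal)
  (hDcomm : ∀ k, ∀ a ∈ D k, ∀ b ∈ D k, ⁅a, b⁆ ∈ D (k + 1))
  (hDanti : ∀ j k, j ≤ k → D k ≤ D j)
  (n : ℕ) (hDn : D n = ⊥)

/-- One step of the construction. -/
noncomputable def chainStep (i : ℕ)
    (p : {S : Subgroup G // S.Normal ∧ D (n - i) ≤ S}) :
    {S' : Subgroup G // S'.Normal ∧ D (n - (i + 1)) ≤ S' ∧ p.1 ≤ S' ∧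
      QuotAlmostAbelian p.1 S' p.2.1} := by
  haveI hS : p.1.Normal := p.2.1
  have hle : D (n - i) ≤ p.1 := p.2.2
  set S := p.1 with hSdef
  set B := (D (n - (i + 1))).map (QuotientGroup.mk' S) with hB
  have hBnorm : B.Normal :=
    (hDnorm _).map _ (QuotientGroup.mk'_surjective S)
  have hBcomm : ∀ x ∈ B, ∀ y ∈ B, x * y = y * x := by
    rintro _ ⟨a, ha, rfl⟩ _ ⟨b, hb, rfl⟩
    rw [← commutatorElement_eq_one_iff_mul_comm, ← map_commutatorElement]
    have h1 : ⁅a, b⁆ ∈ D (n - (i + 1) + 1) := hDcomm _ a ha b hb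
    have h2 : ⁅a, b⁆ ∈ D (n - i) := hDanti _ _ (by omega) h1
    exact (QuotientGroup.eq_one_iff _).mpr (hle h2)
  have hex := hyp S B hBnorm hBcomm
  obtain ⟨hCnorm, hBC, hCaa⟩ := hex.choose_spec
  refine ⟨hex.choose.comap (QuotientGroup.mk' S), hCnorm.comap _, ?_, ?_, ?_⟩
  · intro a ha
    exact hBC ⟨a, ha, rfl⟩
  · have h : S ≤ (QuotientGroup.mk' S).ker := le_of_eq (QuotientGroup.ker_mk' S).symm
    exact h.trans (Subgroup.ker_le_comap (f := QuotientGroup.mk' S) hex.choose)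
  · unfold QuotAlmostAbelian
    rw [Subgroup.map_comap_eq_self_of_surjective (QuotientGroup.mk'_surjective S)
      hex.choose]
    exact hCaa

/-- The full chain. -/
noncomputable def chainFun : ∀ i : ℕ, {S : Subgroup G // S.Normal ∧ D (n - i) ≤ S}
  | 0 => ⟨⊥, inferInstance, by simp [hDn]⟩
  | (i + 1) =>
    let q := chainStep hyp D hDnorm hDcomm hDanti n i (chainFun i)
    ⟨q.1, q.2.1, q.2.2.1⟩

theorem chain_spec (i : ℕ) :
    (chainFun hyp D hDnorm hDcomm hDanti n hDn i).1 ≤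
      (chainFun hyp D hDnorm hDcomm hDanti n hDn (i + 1)).1 ∧
    QuotAlmostAbelian (chainFun hyp D hDnorm hDcomm hDanti n hDn i).1
      (chainFun hyp D hDnorm hDcomm hDanti n hDn (i + 1)).1
      (chainFun hyp D hDnorm hDcomm hDanti n hDn i).2.1 :=
  ⟨(chainStep hyp D hDnorm hDcomm hDanti n i
      (chainFun hyp D hDnorm hDcomm hDanti n hDn i)).2.2.2.1,
    (chainStep hyp D hDnorm hDcomm hDanti n i
      (chainFun hyp D hDnorm hDcomm hDanti n hDn i)).2.2.2.2⟩

end Aux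

theorem solvable_almost_series {G : Type*} [Group G]
    (hyp : ∀ (N : Subgroup G) [N.Normal] (B : Subgroup (G ⧸ N)),
      B.Normal → (∀ x ∈ B, ∀ y ∈ B, x * y = y * x) →
      ∃ C : Subgroup (G ⧸ N), C.Normal ∧ B ≤ C ∧ AlmostAbelian ↥C)
    (H : Subgroup G) (hHnormal : H.Normal) (n : ℕ)
    (hsol : derivedSeries ↥H n = ⊥) :
    ∃ S : ℕ → Subgroup G, ∃ hnorm : ∀ i, (S i).Normal,
      S 0 = ⊥ ∧ (∀ i < n, S i ≤ S (i + 1)) ∧ H ≤ S n ∧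
      ∀ i < n, QuotAlmostAbelian (S i) (S (i + 1)) (hnorm i) := by
  set D : ℕ → Subgroup G := fun k => (derivedSeries ↥H k).map H.subtype with hD
  have hD0 : D 0 = H := by
    simp [hD, derivedSeries_zero, ← MonoidHom.range_eq_map, Subgroup.range_subtype]
  have hDsucc : ∀ k, D (k + 1) = ⁅D k, D k⁆ := fun k => by
    simp [hD, derivedSeries_succ, Subgroup.map_commutator]
  have hDnorm : ∀ k, (D k).Normal := by
    intro k
    induction k with
    | zero => rw [hD0]; exact hHnormal
    | succ k ih => rw [hDsucc]; exact @Subgroup.commutator_normal G _ (D k) (D k) ih ih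
  have hDcomm : ∀ k, ∀ a ∈ D k, ∀ b ∈ D k, ⁅a, b⁆ ∈ D (k + 1) := by
    intro k a ha b hb
    rw [hDsucc]
    exact Subgroup.commutator_mem_commutator ha hb
  have hDstep : ∀ k, D (k + 1) ≤ D k := by
    intro k
    rw [hDsucc]
    exact @Subgroup.commutator_le_left G _ (D k) (D k) (hDnorm k)
  have hDanti : ∀ j k, j ≤ k → D k ≤ D j := by
    intro j k hjk
    induction k with
    | zero => simp_all
    | succ k ih =>
      rcases Nat.lt_or_ge j (k + 1) with h | h
      · exact (hDstep k).trans (ih (by omega))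
      · have : j = k + 1 := by omega
        subst this; exact le_refl _
  have hDn : D n = ⊥ := by simp [hD, hsol]
  refine ⟨fun i => (chainFun hyp D hDnorm hDcomm hDanti n hDn i).1,
    fun i => (chainFun hyp D hDnorm hDcomm hDanti n hDn i).2.1, rfl, ?_, ?_, ?_⟩
  · exact fun i _ => (chain_spec hyp D hDnorm hDcomm hDanti n hDn i).1
  · have := (chainFun hyp D hDnorm hDcomm hDanti n hDn n).2.2
    simpa [hD0] using this
  · exact fun i _ => (chain_spec hyp D hDnorm hDcomm hDanti n hDn i).2
end

section
/- Let K be a group and A a normal subgroup of K such that the commutator subgroup X := [A,K] is finite and every element x ∈ X has centralizer C_K(x) of finite index in K. Then N := C_K(X) is a subgroup of finite index in K, X ∩ N is contained in the center Z(N), and A ∩ N is contained in the second center Z₂(N). -/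
open scoped commutatorElement

private lemma centralizer_insert' {K : Type*} [Group K] (x : K) (S : Set K) :
    Subgroup.centralizer (insert x S) =
      Subgroup.centralizer {x} ⊓ Subgroup.centralizer S := by
  ext g
  simp [Subgroup.mem_centralizer_iff, forall_and]

private lemma index_centralizer_ne_zero {K : Type*} [Group K] {S : Set K}
    (hS : S.Finite) (h : ∀ x ∈ S, (Subgroup.centralizer ({x} : Set K)).index ≠ 0) :
    (Subgroup.centralizer S).index ≠ 0 := by
  refine Set.Finite.induction_on (motive := fun S _ =>
      (∀ x ∈ S, (Subgroup.centralizer ({x} : Set K)).index ≠ 0) →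
        (Subgroup.centralizer S).index ≠ 0) S hS ?_ ?_ h
  · intro _
    have : Subgroup.centralizer (∅ : Set K) = ⊤ := by
      ext g; simp [Subgroup.mem_centralizer_iff]
    simp [this, Subgroup.index_top]
  · intro x S _ _ ih h'
    rw [centralizer_insert']
    exact Subgroup.index_inf_ne_zero (h' x (Set.mem_insert _ _))
      (ih fun y hy => h' y (Set.mem_insert_of_mem _ hy))

theorem centralizer_of_finite_commutator {K : Type*} [Group K]
    (A : Subgroup K) (hA : A.Normal)
    (hXfin : ((⁅A, (⊤ : Subgroup K)⁆ : Subgroup K) : Set K).Finite)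
    (hXcen : ∀ x ∈ (⁅A, (⊤ : Subgroup K)⁆ : Subgroup K),
      (Subgroup.centralizer ({x} : Set K)).index ≠ 0) :
    ∃ (X N Z : Subgroup K),
      X = ⁅A, (⊤ : Subgroup K)⁆ ∧
      N = Subgroup.centralizer (X : Set K) ∧
      -- Z = Z(N), the center of N viewed as a subgroup of K
      Z = N ⊓ Subgroup.centralizer (N : Set K) ∧
      -- N has finite index in K
      N.index ≠ 0 ∧
      -- X ∩ N ⊆ Z(N)
      X ⊓ N ≤ Z ∧
      -- A ∩ N ⊆ Z₂(N): every commutator [a, n] with a ∈ A ∩ N, n ∈ N lies in Z(N)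
      (∀ a ∈ A ⊓ N, ∀ n ∈ N, a⁻¹ * n⁻¹ * a * n ∈ Z) := by
  set X : Subgroup K := ⁅A, (⊤ : Subgroup K)⁆ with hX
  set N : Subgroup K := Subgroup.centralizer (X : Set K) with hN
  have hXN : X ⊓ N ≤ N ⊓ Subgroup.centralizer (N : Set K) := by
    rintro g ⟨hgX, hgN⟩
    refine ⟨hgN, Subgroup.mem_centralizer_iff.2 fun n hn => ?_⟩
    exact (Subgroup.mem_centralizer_iff.1 hn g hgX).symm
  refine ⟨X, N, N ⊓ Subgroup.centralizer (N : Set K), rfl, rfl, rfl,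
    index_centralizer_ne_zero hXfin hXcen, hXN, ?_⟩
  rintro a ⟨haA, haN⟩ n hnN
  have hc : a⁻¹ * n⁻¹ * a * n = ⁅a⁻¹, n⁻¹⁆ := by
    group
  refine hXN ⟨?_, ?_⟩
  · rw [hc]
    exact Subgroup.commutator_mem_commutator (A.inv_mem haA) (Subgroup.mem_top _)
  · exact N.mul_mem (N.mul_mem (N.mul_mem (N.inv_mem haN) (N.inv_mem hnN)) haN) hnN
end
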